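/- arXiv:2010.01008 — 3 statements merged into one kernel-verified Lean document; each statement's English description precedes it below -/
import Mathlib

section
/- Base shift for Bailey pairs: Suppose (α'_n)_{n≥0}, (β_n)_{n≥0} form a Bailey pair with respect to base a, and suppose a q^m ≠ 1 for all integers m ≥ 1. Then a sequence (α_n)_{n≥0} is such that (α_n), (β_n) form a Bailey pair with respect to base aq if and only if for all n ≥ 0: ((1 − aq)/(1 − a q^{2n+1})) α_n = Σ_{r=0}^{n} a^{n−r} q^{n²−r²} α'_r. Moreover, this last condition holds if and only if the sequence ã_n := ((1 − aq)/(1 − a q^{2n+1})) α_n satisfies ã_0 = α'_0 and ã_{n+1} = a q^{2n+1} ã_n + α'_{n+1} for all n ≥ 0. -/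
open Finset

noncomputable def qPoch (a q : ℂ) (n : ℕ) : ℂ :=
  ∏ t ∈ Finset.range n, (1 - a * q ^ t)

noncomputable def qPochInf (a q : ℂ) : ℂ :=
  ∏' t : ℕ, (1 - a * q ^ t)

def IsBaileyPair (q a : ℂ) (α β : ℕ → ℂ) : Prop :=
  ∀ n : ℕ, β n =
    ∑ t ∈ Finset.range (n + 1), α t / (qPoch q q (n - t) * qPoch (a * q) q (n + t))

/-! ### Auxiliary lemmas -/

lemma qPoch_succ (q x : ℂ) (m : ℕ) :
    qPoch x q (m + 1) = qPoch x q m * (1 - x * q ^ m) :=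
  Finset.prod_range_succ _ _

lemma qPoch_shift (q a : ℂ) (m : ℕ) :
    qPoch (a * q) q (m + 1) = (1 - a * q) * qPoch (a * q * q) q m := by
  unfold qPoch
  rw [Finset.prod_range_succ', pow_zero, mul_one, mul_comm]
  congr 1
  exact Finset.prod_congr rfl fun t _ => by ring

lemma qpow_ne_one {q : ℂ} (hq1 : ‖q‖ < 1) {m : ℕ} (hm : 1 ≤ m) : q ^ m ≠ 1 := by
  intro hcon
  have h : ‖q ^ m‖ < 1 := by
    rw [norm_pow]
    exact pow_lt_one₀ (norm_nonneg q) hq1 (by omega)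
  rw [hcon] at h
  simp at h

lemma qPoch_qq_ne_zero {q : ℂ} (hq1 : ‖q‖ < 1) (k : ℕ) : qPoch q q k ≠ 0 := by
  unfold qPoch
  refine Finset.prod_ne_zero_iff.mpr fun t _ => sub_ne_zero.mpr (Ne.symm ?_)
  have h1 : q * q ^ t = q ^ (t + 1) := by ring
  rw [h1]
  exact qpow_ne_one hq1 (by omega)

lemma qPoch_aq_ne_zero {q a : ℂ} (ha : ∀ m : ℕ, 1 ≤ m → a * q ^ m ≠ 1) (k : ℕ) :
    qPoch (a * q) q k ≠ 0 := by
  unfold qPoch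
  refine Finset.prod_ne_zero_iff.mpr fun t _ => sub_ne_zero.mpr (Ne.symm ?_)
  have h1 : a * q * q ^ t = a * q ^ (t + 1) := by ring
  rw [h1]
  exact ha (t + 1) (by omega)

lemma qPoch_aqq_ne_zero {q a : ℂ} (ha : ∀ m : ℕ, 1 ≤ m → a * q ^ m ≠ 1) (k : ℕ) :
    qPoch (a * q * q) q k ≠ 0 := by
  unfold qPoch
  refine Finset.prod_ne_zero_iff.mpr fun t _ => sub_ne_zero.mpr (Ne.symm ?_)
  have h1 : a * q * q * q ^ t = a * q ^ (t + 2) := by ring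
  rw [h1]
  exact ha (t + 2) (by omega)

lemma one_sub_aq_ne_zero {q a : ℂ} (ha : ∀ m : ℕ, 1 ≤ m → a * q ^ m ≠ 1) :
    (1 : ℂ) - a * q ≠ 0 := by
  have := ha 1 le_rfl
  rw [pow_one] at this
  exact sub_ne_zero.mpr (Ne.symm this)

lemma one_sub_aqodd_ne_zero {q a : ℂ} (ha : ∀ m : ℕ, 1 ≤ m → a * q ^ m ≠ 1) (n : ℕ) :
    (1 : ℂ) - a * q ^ (2 * n + 1) ≠ 0 :=
  sub_ne_zero.mpr (Ne.symm (ha (2 * n + 1) (by omega)))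

/-- recurrence for the partial sums -/
lemma S_rec (q a : ℂ) (α' : ℕ → ℂ) (n : ℕ) :
    ∑ r ∈ Finset.range (n + 1 + 1), a ^ (n + 1 - r) * q ^ ((n + 1) ^ 2 - r ^ 2) * α' r =
      a * q ^ (2 * n + 1) *
        (∑ r ∈ Finset.range (n + 1), a ^ (n - r) * q ^ (n ^ 2 - r ^ 2) * α' r) + α' (n + 1) := by
  rw [Finset.sum_range_succ]
  congr 1
  · rw [Finset.mul_sum]
    refine Finset.sum_congr rfl fun r hr => ?_
    have hrn : r ≤ n := by
      have := Finset.mem_range.mp hr; omega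
    have hr2 : r ^ 2 ≤ n ^ 2 := Nat.pow_le_pow_left hrn 2
    have hsq : (n + 1) ^ 2 = n ^ 2 + (2 * n + 1) := by ring
    have h1 : n + 1 - r = (n - r) + 1 := by omega
    have h2 : (n + 1) ^ 2 - r ^ 2 = (n ^ 2 - r ^ 2) + (2 * n + 1) := by omega
    rw [h1, h2, pow_add, pow_add]
    ring
  · simp

/-- swapping the order of a triangular double sum -/
lemma swap_aux {M : Type*} [AddCommMonoid M] (n : ℕ) (f : ℕ → ℕ → M) :
    ∑ t ∈ Finset.range (n + 1), ∑ r ∈ Finset.range (t + 1), f t r =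
      ∑ r ∈ Finset.range (n + 1), ∑ t ∈ Finset.Ico r (n + 1), f t r := by
  simp only [Finset.range_eq_Ico]
  exact (Finset.sum_Ico_Ico_comm 0 (n + 1) fun r t => f t r).symm

/-- telescoping identity -/
lemma telescope {q a : ℂ} (hq1 : ‖q‖ < 1)
    (ha : ∀ m : ℕ, 1 ≤ m → a * q ^ m ≠ 1) :
    ∀ k r : ℕ,
      ∑ t ∈ Finset.Ico r (r + k + 1),
          (1 - a * q ^ (2 * t + 1)) * (a ^ (t - r) * q ^ (t ^ 2 - r ^ 2)) /
            (qPoch q q (r + k - t) * qPoch (a * q) q (r + k + t + 1)) =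
        1 / (qPoch q q k * qPoch (a * q) q (2 * r + k)) := by
  intro k
  induction k with
  | zero =>
    intro r
    have h1 : r + 0 + 1 = r + 1 := rfl
    rw [h1, Finset.sum_Ico_eq_sum_range]
    have h2 : r + 1 - r = 1 := by omega
    rw [h2, Finset.sum_range_one]
    simp only [add_zero, Nat.sub_self, pow_zero, mul_one, one_mul]
    rw [show r + r + 1 = 2 * r + 1 from by omega, qPoch_succ q (a * q) (2 * r),
      show qPoch q q 0 = 1 from by simp [qPoch], one_mul, one_mul]
    have hY : qPoch (a * q) q (2 * r) ≠ 0 := qPoch_aq_ne_zero ha _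
    have hx : (1 : ℂ) - a * q * q ^ (2 * r) ≠ 0 := by
      refine sub_ne_zero.mpr (Ne.symm ?_)
      have hh : a * q * q ^ (2 * r) = a * q ^ (2 * r + 1) := by ring
      rw [hh]
      exact ha _ (by omega)
    rw [div_eq_div_iff (mul_ne_zero hY hx) hY]
    ring
  | succ k ih =>
    intro r
    have hlt : r < r + (k + 1) + 1 := by omega
    rw [Finset.sum_eq_sum_Ico_succ_bot hlt]
    have hrest :
        ∑ t ∈ Finset.Ico (r + 1) (r + (k + 1) + 1),
            (1 - a * q ^ (2 * t + 1)) * (a ^ (t - r) * q ^ (t ^ 2 - r ^ 2)) /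
              (qPoch q q (r + (k + 1) - t) * qPoch (a * q) q (r + (k + 1) + t + 1)) =
          a * q ^ (2 * r + 1) *
            ∑ t ∈ Finset.Ico (r + 1) ((r + 1) + k + 1),
              (1 - a * q ^ (2 * t + 1)) * (a ^ (t - (r + 1)) * q ^ (t ^ 2 - (r + 1) ^ 2)) /
                (qPoch q q ((r + 1) + k - t) * qPoch (a * q) q ((r + 1) + k + t + 1)) := by
      rw [Finset.mul_sum]
      have hset : r + (k + 1) + 1 = (r + 1) + k + 1 := by omega
      rw [hset]
      refine Finset.sum_congr rfl fun t ht => ?_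
      have htr : r + 1 ≤ t := (Finset.mem_Ico.mp ht).1
      have hi1 : r + (k + 1) - t = (r + 1) + k - t := by omega
      have hi2 : r + (k + 1) + t + 1 = (r + 1) + k + t + 1 := by omega
      have he1 : t - r = (t - (r + 1)) + 1 := by omega
      have hr2 : (r + 1) ^ 2 ≤ t ^ 2 := Nat.pow_le_pow_left htr 2
      have hsq : (r + 1) ^ 2 = r ^ 2 + (2 * r + 1) := by ring
      have he2 : t ^ 2 - r ^ 2 = (t ^ 2 - (r + 1) ^ 2) + (2 * r + 1) := by omega
      rw [hi1, hi2, he1, he2, pow_add, pow_add]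
      ring
    rw [hrest, ih (r + 1)]
    have hi3 : r + (k + 1) - r = k + 1 := by omega
    have hi4 : r + (k + 1) + r + 1 = 2 * r + k + 1 + 1 := by omega
    have hi5 : 2 * (r + 1) + k = 2 * r + k + 1 + 1 := by omega
    have hi6 : 2 * r + (k + 1) = 2 * r + k + 1 := by omega
    rw [hi3, hi4, hi5, hi6]
    simp only [Nat.sub_self, pow_zero, mul_one, one_mul]
    rw [qPoch_succ q q k, qPoch_succ q (a * q) (2 * r + k + 1), qPoch_succ q (a * q) (2 * r + k)]
    have hX : qPoch q q k ≠ 0 := qPoch_qq_ne_zero hq1 k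
    have hY : qPoch (a * q) q (2 * r + k) ≠ 0 := qPoch_aq_ne_zero ha _
    have hu : (1 : ℂ) - q * q ^ k ≠ 0 := by
      refine sub_ne_zero.mpr (Ne.symm ?_)
      have hh : q * q ^ k = q ^ (k + 1) := by ring
      rw [hh]
      exact qpow_ne_one hq1 (by omega)
    have hv : (1 : ℂ) - a * q * q ^ (2 * r + k) ≠ 0 := by
      refine sub_ne_zero.mpr (Ne.symm ?_)
      have hh : a * q * q ^ (2 * r + k) = a * q ^ (2 * r + k + 1) := by ring
      rw [hh]
      exact ha _ (by omega)
    have hw : (1 : ℂ) - a * q * q ^ (2 * r + k + 1) ≠ 0 := by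
      refine sub_ne_zero.mpr (Ne.symm ?_)
      have hh : a * q * q ^ (2 * r + k + 1) = a * q ^ (2 * r + k + 2) := by ring
      rw [hh]
      exact ha _ (by omega)
    have hD1 : qPoch q q k * (1 - q * q ^ k) *
        (qPoch (a * q) q (2 * r + k) * (1 - a * q * q ^ (2 * r + k)) *
          (1 - a * q * q ^ (2 * r + k + 1))) ≠ 0 :=
      mul_ne_zero (mul_ne_zero hX hu) (mul_ne_zero (mul_ne_zero hY hv) hw)
    have hD2 : qPoch q q k *
        (qPoch (a * q) q (2 * r + k) * (1 - a * q * q ^ (2 * r + k)) *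
          (1 - a * q * q ^ (2 * r + k + 1))) ≠ 0 :=
      mul_ne_zero hX (mul_ne_zero (mul_ne_zero hY hv) hw)
    have hD3 : qPoch q q k * (1 - q * q ^ k) *
        (qPoch (a * q) q (2 * r + k) * (1 - a * q * q ^ (2 * r + k))) ≠ 0 :=
      mul_ne_zero (mul_ne_zero hX hu) (mul_ne_zero hY hv)
    rw [mul_one_div, div_add_div _ _ hD1 hD2, div_eq_div_iff (mul_ne_zero hD1 hD2) hD3]
    ring

/-- uniqueness of the `α` sequence in a Bailey pair -/
lemma bailey_unique {q a : ℂ} (hq1 : ‖q‖ < 1)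
    (ha : ∀ m : ℕ, 1 ≤ m → a * q ^ m ≠ 1) (β α₁ α₂ : ℕ → ℂ)
    (h1 : IsBaileyPair q (a * q) α₁ β) (h2 : IsBaileyPair q (a * q) α₂ β) :
    ∀ n, α₁ n = α₂ n := by
  intro n
  induction n using Nat.strong_induction_on with
  | _ n ih =>
    have e1 := h1 n
    have e2 := h2 n
    rw [Finset.sum_range_succ] at e1 e2
    have hsum :
        ∑ t ∈ Finset.range n, α₁ t / (qPoch q q (n - t) * qPoch (a * q * q) q (n + t)) =
          ∑ t ∈ Finset.range n, α₂ t / (qPoch q q (n - t) * qPoch (a * q * q) q (n + t)) :=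
      Finset.sum_congr rfl fun t ht => by rw [ih t (Finset.mem_range.mp ht)]
    have key :
        α₁ n / (qPoch q q (n - n) * qPoch (a * q * q) q (n + n)) =
          α₂ n / (qPoch q q (n - n) * qPoch (a * q * q) q (n + n)) := by
      have := e1.symm.trans e2
      rw [hsum] at this
      exact add_left_cancel this
    have hD : qPoch q q (n - n) * qPoch (a * q * q) q (n + n) ≠ 0 :=
      mul_ne_zero (qPoch_qq_ne_zero hq1 _) (qPoch_aqq_ne_zero ha _)
    have hkey := key
    rw [div_eq_div_iff hD hD] at hkey
    exact mul_right_cancel₀ hD hkey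

/-- the canonical `α` for base `aq` is a Bailey pair with `β` -/
lemma bp_star {q a : ℂ} (hq1 : ‖q‖ < 1)
    (ha : ∀ m : ℕ, 1 ≤ m → a * q ^ m ≠ 1) (α' β : ℕ → ℂ) (h : IsBaileyPair q a α' β) :
    IsBaileyPair q (a * q)
      (fun n => (1 - a * q ^ (2 * n + 1)) / (1 - a * q) *
        ∑ r ∈ Finset.range (n + 1), a ^ (n - r) * q ^ (n ^ 2 - r ^ 2) * α' r) β := by
  intro n
  rw [h n]
  have h1aq : (1 : ℂ) - a * q ≠ 0 := one_sub_aq_ne_zero ha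
  calc
    ∑ t ∈ Finset.range (n + 1), α' t / (qPoch q q (n - t) * qPoch (a * q) q (n + t)) =
        ∑ r ∈ Finset.range (n + 1), ∑ t ∈ Finset.Ico r (n + 1),
          α' r * ((1 - a * q ^ (2 * t + 1)) * (a ^ (t - r) * q ^ (t ^ 2 - r ^ 2)) /
            (qPoch q q (n - t) * qPoch (a * q) q (n + t + 1))) := by
      refine Finset.sum_congr rfl fun r hr => ?_
      have hrn : r ≤ n := by have := Finset.mem_range.mp hr; omega
      have hk : n + 1 = r + (n - r) + 1 := by omega
      rw [show (∑ t ∈ Finset.Ico r (n + 1),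
          α' r * ((1 - a * q ^ (2 * t + 1)) * (a ^ (t - r) * q ^ (t ^ 2 - r ^ 2)) /
            (qPoch q q (n - t) * qPoch (a * q) q (n + t + 1)))) =
          α' r * ∑ t ∈ Finset.Ico r (r + (n - r) + 1),
            (1 - a * q ^ (2 * t + 1)) * (a ^ (t - r) * q ^ (t ^ 2 - r ^ 2)) /
              (qPoch q q (r + (n - r) - t) * qPoch (a * q) q (r + (n - r) + t + 1)) from ?_]
      · rw [telescope hq1 ha (n - r) r]
        rw [show 2 * r + (n - r) = n + r from by omega, mul_one_div]
      · rw [Finset.mul_sum, ← hk]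
        refine Finset.sum_congr rfl fun t ht => ?_
        have h1 : n - t = r + (n - r) - t := by omega
        have h2 : n + t + 1 = r + (n - r) + t + 1 := by omega
        rw [h1, h2]
    _ = ∑ t ∈ Finset.range (n + 1), ∑ r ∈ Finset.range (t + 1),
          α' r * ((1 - a * q ^ (2 * t + 1)) * (a ^ (t - r) * q ^ (t ^ 2 - r ^ 2)) /
            (qPoch q q (n - t) * qPoch (a * q) q (n + t + 1))) :=
      (swap_aux n _).symm
    _ = ∑ t ∈ Finset.range (n + 1),
          ((1 - a * q ^ (2 * t + 1)) / (1 - a * q) *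
              ∑ r ∈ Finset.range (t + 1), a ^ (t - r) * q ^ (t ^ 2 - r ^ 2) * α' r) /
            (qPoch q q (n - t) * qPoch (a * q * q) q (n + t)) := by
      refine Finset.sum_congr rfl fun t ht => ?_
      have hsh : qPoch (a * q) q (n + t + 1) = (1 - a * q) * qPoch (a * q * q) q (n + t) :=
        qPoch_shift q a (n + t)
      have hP1 : qPoch q q (n - t) ≠ 0 := qPoch_qq_ne_zero hq1 _
      have hP2 : qPoch (a * q * q) q (n + t) ≠ 0 := qPoch_aqq_ne_zero ha _
      rw [Finset.mul_sum, Finset.sum_div]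
      refine Finset.sum_congr rfl fun r hr => ?_
      rw [hsh]
      field_simp

lemma div_mul_div_self_aux {x y : ℂ} (hx : x ≠ 0) (hy : y ≠ 0) : x / y * (y / x) = 1 := by
  rw [div_mul_div_comm, div_eq_one_iff_eq (mul_ne_zero hy hx)]
  ring

theorem base_shift (q a : ℂ) (hq0 : 0 < ‖q‖) (hq1 : ‖q‖ < 1)
    (ha : ∀ m : ℕ, 1 ≤ m → a * q ^ m ≠ 1)
    (α' β : ℕ → ℂ) (h : IsBaileyPair q a α' β) (α : ℕ → ℂ) :
    (IsBaileyPair q (a * q) α β ↔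
      ∀ n : ℕ, (1 - a * q) / (1 - a * q ^ (2 * n + 1)) * α n =
        ∑ r ∈ Finset.range (n + 1), a ^ (n - r) * q ^ (n ^ 2 - r ^ 2) * α' r) ∧
    ((∀ n : ℕ, (1 - a * q) / (1 - a * q ^ (2 * n + 1)) * α n =
        ∑ r ∈ Finset.range (n + 1), a ^ (n - r) * q ^ (n ^ 2 - r ^ 2) * α' r) ↔
      ((1 - a * q) / (1 - a * q ^ 1) * α 0 = α' 0 ∧
        ∀ n : ℕ, (1 - a * q) / (1 - a * q ^ (2 * (n + 1) + 1)) * α (n + 1) =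
          a * q ^ (2 * n + 1) * ((1 - a * q) / (1 - a * q ^ (2 * n + 1)) * α n)
            + α' (n + 1))) := by
  have h1aq : (1 : ℂ) - a * q ≠ 0 := one_sub_aq_ne_zero ha
  have hodd : ∀ n : ℕ, (1 : ℂ) - a * q ^ (2 * n + 1) ≠ 0 := one_sub_aqodd_ne_zero ha
  constructor
  · constructor
    · intro hbp n
      have heq := bailey_unique hq1 ha β α _ hbp (bp_star hq1 ha α' β h)
      have hn := heq n
      rw [hn, ← mul_assoc, div_mul_div_self_aux h1aq (hodd n), one_mul]
    · intro hc
      have hα : α = fun n => (1 - a * q ^ (2 * n + 1)) / (1 - a * q) *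
          ∑ r ∈ Finset.range (n + 1), a ^ (n - r) * q ^ (n ^ 2 - r ^ 2) * α' r := by
        funext n
        rw [← hc n, ← mul_assoc, div_mul_div_self_aux (hodd n) h1aq, one_mul]
      rw [hα]
      exact bp_star hq1 ha α' β h
  · constructor
    · intro H
      refine ⟨?_, fun n => ?_⟩
      · have h0 := H 0
        simpa using h0
      · rw [H (n + 1), H n]
        exact S_rec q a α' n
    · rintro ⟨h0, hrec⟩ n
      induction n with
      | zero => simpa using h0
      | succ n ihn =>
        rw [hrec n, ihn]
        exact (S_rec q a α' n).symm
end

section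
/- Bailey pair #1 (shifted Slater A1): The sequences β_n = 1/(q;q)_{2n} and α_m defined by α_m = ((1 − q^{2m+1})/(1 − q)) · c_m, where c_m = q^{(2m²−m)/3} if m ≡ 0 (mod 3), c_m = −q^{(2m²−m)/3} if m ≡ 2 (mod 3), and c_m = 0 if m ≡ 1 (mod 3), form a Bailey pair with respect to base a = q. Equivalently, α̃_m := ((1−q)/(1−q^{2m+1})) α_m equals c_m for all m ≥ 0. -/
open Finset

namespace BP1

lemma qPoch_succ (q : ℂ) (n : ℕ) :
    qPoch q q (n+1) = qPoch q q n * (1 - q^(n+1)) := by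
  unfold qPoch; rw [Finset.prod_range_succ, pow_succ']
lemma qPoch_add (q : ℂ) (a b : ℕ) :
    qPoch q q (a+b) = qPoch q q a * ∏ i ∈ Finset.range b, (1 - q^(a+i+1)) := by
  unfold qPoch
  rw [Finset.prod_range_add]
  congr 1
  refine Finset.prod_congr rfl fun i _ => ?_
  rw [← pow_succ']
lemma one_sub_pow_ne {q : ℂ} (hq : ∀ m : ℕ, 1 ≤ m → q ^ m ≠ 1) (m : ℕ) (hm : 1 ≤ m) :
    (1 : ℂ) - q ^ m ≠ 0 := by
  intro h; exact hq m hm (by linear_combination -h)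
lemma qPoch_ne_zero {q : ℂ} (hq : ∀ m : ℕ, 1 ≤ m → q ^ m ≠ 1) (n : ℕ) :
    qPoch q q n ≠ 0 := by
  unfold qPoch
  refine Finset.prod_ne_zero_iff.2 fun i _ => ?_
  have := one_sub_pow_ne hq (i+1) (by omega)
  rwa [pow_succ'] at this
noncomputable def dd (q : ℂ) (t : ℕ) : ℂ :=
  (if t % 3 = 0 then q ^ ((2*t^2 - t)/3) else if t % 3 = 2 then -q ^ ((2*t^2 - t)/3) else 0)
    * (1 - q^(2*t+1))
noncomputable def ff (q : ℂ) (n t : ℕ) : ℂ :=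
  dd q t / (qPoch q q (n-t) * qPoch q q (n+1+t))
noncomputable def TT (q : ℂ) (n t : ℕ) : ℂ :=
  qPoch q q (2*n+2) * ff q (n+1) t - qPoch q q (2*n) * ff q n t
noncomputable def F2 (q : ℂ) (n k : ℕ) : ℂ :=
  qPoch q q (2*n) / (qPoch q q (n-(3*k+1)) * qPoch q q (n+3*k+2)) *
    (q^(n+6*k^2+4*k+1)*(1-q^(4*k+2)) + q^(2*n+6*k^2+5*k+2)*(1-q^(2*k+1)))
section
variable {q : ℂ}
lemma dd_mod1 {t : ℕ} (h : t % 3 = 1) : dd q t = 0 := by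
  simp [dd, h]
lemma dd_eq2 (k : ℕ) : dd q (3*k+2) = -(q^(6*k^2+7*k+2)) * (1 - q^(6*k+5)) := by
  unfold dd
  rw [if_neg (by omega), if_pos (by omega)]
  have h : (2*(3*k+2)^2 - (3*k+2))/3 = 6*k^2+7*k+2 := by
    have h2 : (3*k+2)^2 = 9*k^2+12*k+4 := by ring
    omega
  rw [h, show 2*(3*k+2)+1 = 6*k+5 from by omega]
lemma dd_eq3 (k : ℕ) : dd q (3*k+3) = q^(6*k^2+11*k+5) * (1 - q^(6*k+7)) := by
  unfold dd
  rw [if_pos (by omega)]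
  have h : (2*(3*k+3)^2 - (3*k+3))/3 = 6*k^2+11*k+5 := by
    have h2 : (3*k+3)^2 = 9*k^2+18*k+9 := by ring
    omega
  rw [h, show 2*(3*k+3)+1 = 6*k+7 from by omega]
lemma qPoch_zero : qPoch q q 0 = 1 := by simp [qPoch]
lemma qPoch_one : qPoch q q 1 = 1 - q := by simp [qPoch]
lemma qPoch_two : qPoch q q 2 = (1-q) * (1-q^2) := by
  unfold qPoch
  rw [Finset.prod_range_succ, Finset.prod_range_succ, Finset.prod_range_zero]
  ring

lemma close0 (hq : ∀ j : ℕ, 1 ≤ j → q ^ j ≠ 1) (k : ℕ) :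
    F2 q (3*k+3) k + TT q (3*k+3) (3*k+2) + TT q (3*k+3) (3*k+3) = 0 := by
  have s6 : qPoch q q (6*k+6) = qPoch q q (6*k+5) * (1 - q^(6*k+6)) := by
    rw [show 6*k+6 = (6*k+5)+1 from by ring, qPoch_succ]
  have s7 : qPoch q q (6*k+7) = qPoch q q (6*k+5) * ((1 - q^(6*k+6)) * (1 - q^(6*k+7))) := by
    rw [show 6*k+7 = (6*k+5)+2 from by ring, qPoch_add q (6*k+5) 2]
    simp [Finset.prod_range_succ]
  have s8 : qPoch q q (6*k+8) = qPoch q q (6*k+5) *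
      ((1 - q^(6*k+6)) * (1 - q^(6*k+7)) * (1 - q^(6*k+8))) := by
    rw [show 6*k+8 = (6*k+5)+3 from by ring, qPoch_add q (6*k+5) 3]
    simp [Finset.prod_range_succ]
  simp only [TT, ff, F2, dd_eq2, dd_eq3]
  rw [show 3*k+3-(3*k+1) = 2 from by omega,
    show 3*k+3+3*k+2 = 6*k+5 from by omega,
    show 2*(3*k+3)+2 = 6*k+8 from by omega,
    show 2*(3*k+3) = 6*k+6 from by omega,
    show 3*k+3+1-(3*k+2) = 2 from by omega,
    show 3*k+3+1+1+(3*k+2) = 6*k+7 from by omega,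
    show 3*k+3-(3*k+2) = 1 from by omega,
    show 3*k+3+1+(3*k+2) = 6*k+6 from by omega,
    show 3*k+3+1-(3*k+3) = 1 from by omega,
    show 3*k+3+1+1+(3*k+3) = 6*k+8 from by omega,
    show 3*k+3-(3*k+3) = 0 from by omega,
    show 3*k+3+1+(3*k+3) = 6*k+7 from by omega]
  rw [qPoch_zero, qPoch_one, qPoch_two, s6, s7, s8]
  have nzS : qPoch q q (6*k+5) ≠ 0 := qPoch_ne_zero hq _
  have n1 : (1:ℂ) - q ≠ 0 := by
    have := one_sub_pow_ne hq 1 le_rfl; rwa [pow_one] at this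
  have n2 := one_sub_pow_ne hq 2 (by omega)
  have n6 := one_sub_pow_ne hq (6*k+6) (by omega)
  have n7 := one_sub_pow_ne hq (6*k+7) (by omega)
  have n8 := one_sub_pow_ne hq (6*k+8) (by omega)
  have hD : ((1-q) * (1-q^2) * qPoch q q (6*k+5) * ((1 - q ^ (6*k+6)) * (1 - q ^ (6*k+7)) * (1 - q ^ (6*k+8)))) ≠ 0 := by apply_rules [mul_ne_zero, one_ne_zero]
  have t1 : qPoch q q (6*k+5) * (1 - q ^ (6*k+6)) / ((1-q) * (1-q^2) * qPoch q q (6*k+5)) * (q ^ (3*k+3+6*k^2+4*k+1) * (1 - q ^ (4*k+2)) + q ^ (6*k+6+6*k^2+5*k+2) * (1 - q ^ (2*k+1)))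
      = qPoch q q (6*k+5) * (1 - q ^ (6*k+6)) * (q ^ (3*k+3+6*k^2+4*k+1) * (1 - q ^ (4*k+2)) + q ^ (6*k+6+6*k^2+5*k+2) * (1 - q ^ (2*k+1))) * ((1 - q ^ (6*k+6)) * (1 - q ^ (6*k+7)) * (1 - q ^ (6*k+8))) / ((1-q) * (1-q^2) * qPoch q q (6*k+5) * ((1 - q ^ (6*k+6)) * (1 - q ^ (6*k+7)) * (1 - q ^ (6*k+8)))) := by
    rw [div_mul_eq_mul_div, div_eq_div_iff (by apply_rules [mul_ne_zero, one_ne_zero]) hD]; ring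
  have t2 : qPoch q q (6*k+5) * ((1 - q ^ (6*k+6)) * (1 - q ^ (6*k+7)) * (1 - q ^ (6*k+8))) * ((-q ^ (6*k^2+7*k+2) * (1 - q ^ (6*k+5))) / ((1-q) * (1-q^2) * (qPoch q q (6*k+5) * ((1 - q ^ (6*k+6)) * (1 - q ^ (6*k+7))))))
      = qPoch q q (6*k+5) * ((1 - q ^ (6*k+6)) * (1 - q ^ (6*k+7)) * (1 - q ^ (6*k+8))) * (-q ^ (6*k^2+7*k+2) * (1 - q ^ (6*k+5))) * (1 - q ^ (6*k+8)) / ((1-q) * (1-q^2) * qPoch q q (6*k+5) * ((1 - q ^ (6*k+6)) * (1 - q ^ (6*k+7)) * (1 - q ^ (6*k+8)))) := by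
    rw [← mul_div_assoc, div_eq_div_iff (by apply_rules [mul_ne_zero, one_ne_zero]) hD]; ring
  have t3 : qPoch q q (6*k+5) * (1 - q ^ (6*k+6)) * ((-q ^ (6*k^2+7*k+2) * (1 - q ^ (6*k+5))) / ((1-q) * (qPoch q q (6*k+5) * (1 - q ^ (6*k+6)))))
      = qPoch q q (6*k+5) * (1 - q ^ (6*k+6)) * (-q ^ (6*k^2+7*k+2) * (1 - q ^ (6*k+5))) * ((1-q^2) * ((1 - q ^ (6*k+7)) * (1 - q ^ (6*k+8)))) / ((1-q) * (1-q^2) * qPoch q q (6*k+5) * ((1 - q ^ (6*k+6)) * (1 - q ^ (6*k+7)) * (1 - q ^ (6*k+8)))) := by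
    rw [← mul_div_assoc, div_eq_div_iff (by apply_rules [mul_ne_zero, one_ne_zero]) hD]; ring
  have t4 : qPoch q q (6*k+5) * ((1 - q ^ (6*k+6)) * (1 - q ^ (6*k+7)) * (1 - q ^ (6*k+8))) * ((q ^ (6*k^2+11*k+5) * (1 - q ^ (6*k+7))) / ((1-q) * (qPoch q q (6*k+5) * ((1 - q ^ (6*k+6)) * (1 - q ^ (6*k+7)) * (1 - q ^ (6*k+8))))))
      = qPoch q q (6*k+5) * ((1 - q ^ (6*k+6)) * (1 - q ^ (6*k+7)) * (1 - q ^ (6*k+8))) * (q ^ (6*k^2+11*k+5) * (1 - q ^ (6*k+7))) * (1-q^2) / ((1-q) * (1-q^2) * qPoch q q (6*k+5) * ((1 - q ^ (6*k+6)) * (1 - q ^ (6*k+7)) * (1 - q ^ (6*k+8)))) := by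
    rw [← mul_div_assoc, div_eq_div_iff (by apply_rules [mul_ne_zero, one_ne_zero]) hD]; ring
  have t5 : qPoch q q (6*k+5) * (1 - q ^ (6*k+6)) * ((q ^ (6*k^2+11*k+5) * (1 - q ^ (6*k+7))) / (1 * (qPoch q q (6*k+5) * ((1 - q ^ (6*k+6)) * (1 - q ^ (6*k+7))))))
      = qPoch q q (6*k+5) * (1 - q ^ (6*k+6)) * (q ^ (6*k^2+11*k+5) * (1 - q ^ (6*k+7))) * ((1-q) * (1-q^2) * (1 - q ^ (6*k+8))) / ((1-q) * (1-q^2) * qPoch q q (6*k+5) * ((1 - q ^ (6*k+6)) * (1 - q ^ (6*k+7)) * (1 - q ^ (6*k+8)))) := by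
    rw [← mul_div_assoc, div_eq_div_iff (by apply_rules [mul_ne_zero, one_ne_zero]) hD]; ring
  rw [t1, t2, t3, t4, t5, div_sub_div_same, ← add_div, div_sub_div_same, ← add_div,
    div_eq_zero_iff]
  left
  ring

lemma close1 (hq : ∀ j : ℕ, 1 ≤ j → q ^ j ≠ 1) (k : ℕ) :
    F2 q (3*k+1) k + qPoch q q (2*(3*k+1)+2) * ff q (3*k+1+1) (3*k+1+1) = 0 := by
  have s3 : qPoch q q (6*k+3) = qPoch q q (6*k+2) * (1 - q^(6*k+3)) := by
    rw [show 6*k+3 = (6*k+2)+1 from by ring, qPoch_succ]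
  have s4 : qPoch q q (6*k+4) = qPoch q q (6*k+2) * ((1 - q^(6*k+3)) * (1 - q^(6*k+4))) := by
    rw [show 6*k+4 = (6*k+2)+2 from by ring, qPoch_add q (6*k+2) 2]
    simp [Finset.prod_range_succ]
  have s5 : qPoch q q (6*k+5) = qPoch q q (6*k+2) *
      ((1 - q^(6*k+3)) * (1 - q^(6*k+4)) * (1 - q^(6*k+5))) := by
    rw [show 6*k+5 = (6*k+2)+3 from by ring, qPoch_add q (6*k+2) 3]
    simp [Finset.prod_range_succ]
  simp only [ff, F2, dd_eq2]
  rw [show 3*k+1-(3*k+1) = 0 from by omega,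
    show 3*k+1+3*k+2 = 6*k+3 from by omega,
    show 2*(3*k+1)+2 = 6*k+4 from by omega,
    show 2*(3*k+1) = 6*k+2 from by omega,
    show 3*k+1+1-(3*k+1+1) = 0 from by omega,
    show 3*k+1+1+1+(3*k+1+1) = 6*k+5 from by omega]
  rw [qPoch_zero, s3, s4, s5]
  have nzV : qPoch q q (6*k+2) ≠ 0 := qPoch_ne_zero hq _
  have n3 := one_sub_pow_ne hq (6*k+3) (by omega)
  have n4 := one_sub_pow_ne hq (6*k+4) (by omega)
  have n5 := one_sub_pow_ne hq (6*k+5) (by omega)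
  have hD : (qPoch q q (6*k+2) * ((1 - q ^ (6*k+3)) * (1 - q ^ (6*k+4)) * (1 - q ^ (6*k+5)))) ≠ 0 := by apply_rules [mul_ne_zero, one_ne_zero]
  have t1 : qPoch q q (6*k+2) / (1 * (qPoch q q (6*k+2) * (1 - q ^ (6*k+3)))) * (q ^ (3*k+1+6*k^2+4*k+1) * (1 - q ^ (4*k+2)) + q ^ (6*k+2+6*k^2+5*k+2) * (1 - q ^ (2*k+1)))
      = qPoch q q (6*k+2) * (q ^ (3*k+1+6*k^2+4*k+1) * (1 - q ^ (4*k+2)) + q ^ (6*k+2+6*k^2+5*k+2) * (1 - q ^ (2*k+1))) * ((1 - q ^ (6*k+4)) * (1 - q ^ (6*k+5))) / (qPoch q q (6*k+2) * ((1 - q ^ (6*k+3)) * (1 - q ^ (6*k+4)) * (1 - q ^ (6*k+5)))) := by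
    rw [div_mul_eq_mul_div, div_eq_div_iff (by apply_rules [mul_ne_zero, one_ne_zero]) hD]; ring
  have t2 : qPoch q q (6*k+2) * ((1 - q ^ (6*k+3)) * (1 - q ^ (6*k+4))) * ((-q ^ (6*k^2+7*k+2) * (1 - q ^ (6*k+5))) / (1 * (qPoch q q (6*k+2) * ((1 - q ^ (6*k+3)) * (1 - q ^ (6*k+4)) * (1 - q ^ (6*k+5))))))
      = qPoch q q (6*k+2) * ((1 - q ^ (6*k+3)) * (1 - q ^ (6*k+4))) * (-q ^ (6*k^2+7*k+2) * (1 - q ^ (6*k+5))) / (qPoch q q (6*k+2) * ((1 - q ^ (6*k+3)) * (1 - q ^ (6*k+4)) * (1 - q ^ (6*k+5)))) := by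
    rw [← mul_div_assoc, div_eq_div_iff (by apply_rules [mul_ne_zero, one_ne_zero]) hD]; ring
  rw [t1, t2, ← add_div, div_eq_zero_iff]
  left
  ring

lemma close2 (hq : ∀ j : ℕ, 1 ≤ j → q ^ j ≠ 1) (k : ℕ) :
    F2 q (3*k+2) k + TT q (3*k+2) (3*k+2) +
      qPoch q q (2*(3*k+2)+2) * ff q (3*k+2+1) (3*k+2+1) = 0 := by
  have s5 : qPoch q q (6*k+5) = qPoch q q (6*k+4) * (1 - q^(6*k+5)) := by
    rw [show 6*k+5 = (6*k+4)+1 from by ring, qPoch_succ]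
  have s6 : qPoch q q (6*k+6) = qPoch q q (6*k+4) * ((1 - q^(6*k+5)) * (1 - q^(6*k+6))) := by
    rw [show 6*k+6 = (6*k+4)+2 from by ring, qPoch_add q (6*k+4) 2]
    simp [Finset.prod_range_succ]
  have s7 : qPoch q q (6*k+7) = qPoch q q (6*k+4) *
      ((1 - q^(6*k+5)) * (1 - q^(6*k+6)) * (1 - q^(6*k+7))) := by
    rw [show 6*k+7 = (6*k+4)+3 from by ring, qPoch_add q (6*k+4) 3]
    simp [Finset.prod_range_succ]
  simp only [TT, ff, F2, dd_eq2]
  rw [show 3*k+2+1 = 3*k+3 from by omega]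
  simp only [dd_eq3]
  rw [show 3*k+2-(3*k+1) = 1 from by omega,
    show 3*k+2+3*k+2 = 6*k+4 from by omega,
    show 2*(3*k+2)+2 = 6*k+6 from by omega,
    show 2*(3*k+2) = 6*k+4 from by omega,
    show 3*k+2+1-(3*k+2) = 1 from by omega,
    show 3*k+2+1+1+(3*k+2) = 6*k+6 from by omega,
    show 3*k+2-(3*k+2) = 0 from by omega,
    show 3*k+2+1+(3*k+2) = 6*k+5 from by omega,
    show 3*k+3-(3*k+3) = 0 from by omega,
    show 3*k+3+1+(3*k+3) = 6*k+7 from by omega]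
  rw [qPoch_zero, qPoch_one, s5, s6, s7]
  have nzU : qPoch q q (6*k+4) ≠ 0 := qPoch_ne_zero hq _
  have n1 : (1:ℂ) - q ≠ 0 := by
    have := one_sub_pow_ne hq 1 le_rfl; rwa [pow_one] at this
  have n5 := one_sub_pow_ne hq (6*k+5) (by omega)
  have n6 := one_sub_pow_ne hq (6*k+6) (by omega)
  have n7 := one_sub_pow_ne hq (6*k+7) (by omega)
  have hD : ((1-q) * (qPoch q q (6*k+4) * ((1 - q ^ (6*k+5)) * (1 - q ^ (6*k+6)) * (1 - q ^ (6*k+7))))) ≠ 0 := by apply_rules [mul_ne_zero, one_ne_zero]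
  have t1 : qPoch q q (6*k+4) / ((1-q) * qPoch q q (6*k+4)) * (q ^ (3*k+2+6*k^2+4*k+1) * (1 - q ^ (4*k+2)) + q ^ (6*k+4+6*k^2+5*k+2) * (1 - q ^ (2*k+1)))
      = qPoch q q (6*k+4) * (q ^ (3*k+2+6*k^2+4*k+1) * (1 - q ^ (4*k+2)) + q ^ (6*k+4+6*k^2+5*k+2) * (1 - q ^ (2*k+1))) * ((1 - q ^ (6*k+5)) * (1 - q ^ (6*k+6)) * (1 - q ^ (6*k+7))) / ((1-q) * (qPoch q q (6*k+4) * ((1 - q ^ (6*k+5)) * (1 - q ^ (6*k+6)) * (1 - q ^ (6*k+7))))) := by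
    rw [div_mul_eq_mul_div, div_eq_div_iff (by apply_rules [mul_ne_zero, one_ne_zero]) hD]; ring
  have t2 : qPoch q q (6*k+4) * ((1 - q ^ (6*k+5)) * (1 - q ^ (6*k+6))) * ((-q ^ (6*k^2+7*k+2) * (1 - q ^ (6*k+5))) / ((1-q) * (qPoch q q (6*k+4) * ((1 - q ^ (6*k+5)) * (1 - q ^ (6*k+6))))))
      = qPoch q q (6*k+4) * ((1 - q ^ (6*k+5)) * (1 - q ^ (6*k+6))) * (-q ^ (6*k^2+7*k+2) * (1 - q ^ (6*k+5))) * (1 - q ^ (6*k+7)) / ((1-q) * (qPoch q q (6*k+4) * ((1 - q ^ (6*k+5)) * (1 - q ^ (6*k+6)) * (1 - q ^ (6*k+7))))) := by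
    rw [← mul_div_assoc, div_eq_div_iff (by apply_rules [mul_ne_zero, one_ne_zero]) hD]; ring
  have t3 : qPoch q q (6*k+4) * ((-q ^ (6*k^2+7*k+2) * (1 - q ^ (6*k+5))) / (1 * (qPoch q q (6*k+4) * (1 - q ^ (6*k+5)))))
      = qPoch q q (6*k+4) * (-q ^ (6*k^2+7*k+2) * (1 - q ^ (6*k+5))) * ((1-q) * ((1 - q ^ (6*k+6)) * (1 - q ^ (6*k+7)))) / ((1-q) * (qPoch q q (6*k+4) * ((1 - q ^ (6*k+5)) * (1 - q ^ (6*k+6)) * (1 - q ^ (6*k+7))))) := by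
    rw [← mul_div_assoc, div_eq_div_iff (by apply_rules [mul_ne_zero, one_ne_zero]) hD]; ring
  have t4 : qPoch q q (6*k+4) * ((1 - q ^ (6*k+5)) * (1 - q ^ (6*k+6))) * ((q ^ (6*k^2+11*k+5) * (1 - q ^ (6*k+7))) / (1 * (qPoch q q (6*k+4) * ((1 - q ^ (6*k+5)) * (1 - q ^ (6*k+6)) * (1 - q ^ (6*k+7))))))
      = qPoch q q (6*k+4) * ((1 - q ^ (6*k+5)) * (1 - q ^ (6*k+6))) * (q ^ (6*k^2+11*k+5) * (1 - q ^ (6*k+7))) * (1-q) / ((1-q) * (qPoch q q (6*k+4) * ((1 - q ^ (6*k+5)) * (1 - q ^ (6*k+6)) * (1 - q ^ (6*k+7))))) := by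
    rw [← mul_div_assoc, div_eq_div_iff (by apply_rules [mul_ne_zero, one_ne_zero]) hD]; ring
  rw [t1, t2, t3, t4, div_sub_div_same, ← add_div, ← add_div, div_eq_zero_iff]
  left
  ring

lemma idI (hq : ∀ j : ℕ, 1 ≤ j → q ^ j ≠ 1) (m : ℕ) : TT q (m+1) 0 = F2 q (m+1) 0 := by
  have h1 : qPoch q q (m+1) = qPoch q q m * (1 - q^(m+1)) := qPoch_succ q m
  have h2 : qPoch q q (m+2) = qPoch q q m * ((1 - q^(m+1)) * (1 - q^(m+2))) := by
    rw [qPoch_add q m 2]; simp [Finset.prod_range_succ]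
  have h3 : qPoch q q (m+3) = qPoch q q m * ((1 - q^(m+1)) * (1 - q^(m+2)) * (1 - q^(m+3))) := by
    rw [qPoch_add q m 3]; simp [Finset.prod_range_succ]
  have h4 : qPoch q q (2*m+4) = qPoch q q (2*m+2) * ((1 - q^(2*m+3)) * (1 - q^(2*m+4))) := by
    rw [show 2*m+4 = (2*m+2)+2 from by ring, qPoch_add q (2*m+2) 2]
    simp [Finset.prod_range_succ]
  simp only [TT, ff, dd, F2]
  norm_num
  rw [show m+2+1 = m+3 from by ring, show m+1+2 = m+3 from by ring,
    show 2*(m+1)+2 = 2*m+4 from by ring, show 2*(m+1) = 2*m+2 from by ring]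
  rw [h1, h2, h3, h4]
  have nz0 : qPoch q q m ≠ 0 := qPoch_ne_zero hq m
  have nzP : qPoch q q (2*m+2) ≠ 0 := qPoch_ne_zero hq _
  have n1 := one_sub_pow_ne hq (m+1) (by omega)
  have n2 := one_sub_pow_ne hq (m+2) (by omega)
  have n3 := one_sub_pow_ne hq (m+3) (by omega)
  simp only [mul_div_assoc', div_mul_eq_mul_div]
  have hB : qPoch q q m * ((1 - q^(m+1)) * (1 - q^(m+2))) *
      (qPoch q q m * ((1 - q^(m+1)) * (1 - q^(m+2)) * (1 - q^(m+3)))) ≠ 0 := by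
    apply_rules [mul_ne_zero]
  have hD : qPoch q q m * (1 - q^(m+1)) * (qPoch q q m * ((1 - q^(m+1)) * (1 - q^(m+2)))) ≠ 0 := by
    apply_rules [mul_ne_zero]
  have hF : qPoch q q m * (qPoch q q m * ((1 - q^(m+1)) * (1 - q^(m+2)) * (1 - q^(m+3)))) ≠ 0 := by
    apply_rules [mul_ne_zero]
  rw [div_sub_div _ _ hB hD, div_eq_div_iff (mul_ne_zero hB hD) hF]
  ring

set_option maxHeartbeats 8000000 in
lemma idII (hq : ∀ j : ℕ, 1 ≤ j → q ^ j ≠ 1) (k m : ℕ) :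
    F2 q (3*k+4+m) (k+1) =
      F2 q (3*k+4+m) k + TT q (3*k+4+m) (3*k+2) + TT q (3*k+4+m) (3*k+3) := by
  have e1 : qPoch q q (m+1) = qPoch q q m * (1 - q^(m+1)) := qPoch_succ q m
  have e2 : qPoch q q (m+2) = qPoch q q m * ((1 - q^(m+1)) * (1 - q^(m+2))) := by
    rw [qPoch_add q m 2]; simp [Finset.prod_range_succ]
  have e3 : qPoch q q (m+3) = qPoch q q m * ((1 - q^(m+1)) * (1 - q^(m+2)) * (1 - q^(m+3))) := by
    rw [qPoch_add q m 3]; simp [Finset.prod_range_succ]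
  have f1 : qPoch q q (6*k+m+7) = qPoch q q (6*k+m+6) * (1 - q^(6*k+m+7)) := by
    rw [show 6*k+m+7 = (6*k+m+6)+1 from by ring, qPoch_succ]
  have f2 : qPoch q q (6*k+m+8) = qPoch q q (6*k+m+6) * ((1 - q^(6*k+m+7)) * (1 - q^(6*k+m+8))) := by
    rw [show 6*k+m+8 = (6*k+m+6)+2 from by ring, qPoch_add q (6*k+m+6) 2]
    simp [Finset.prod_range_succ]
  have f3 : qPoch q q (6*k+m+9) = qPoch q q (6*k+m+6) *
      ((1 - q^(6*k+m+7)) * (1 - q^(6*k+m+8)) * (1 - q^(6*k+m+9))) := by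
    rw [show 6*k+m+9 = (6*k+m+6)+3 from by ring, qPoch_add q (6*k+m+6) 3]
    simp [Finset.prod_range_succ]
  have g2 : qPoch q q (6*k+2*m+10) = qPoch q q (6*k+2*m+8) *
      ((1 - q^(6*k+2*m+9)) * (1 - q^(6*k+2*m+10))) := by
    rw [show 6*k+2*m+10 = (6*k+2*m+8)+2 from by ring, qPoch_add q (6*k+2*m+8) 2]
    simp [Finset.prod_range_succ]
  simp only [TT, ff, F2, dd_eq2, dd_eq3]
  rw [show 3*k+4+m-(3*(k+1)+1) = m from by omega,
    show 3*k+4+m+3*(k+1)+2 = 6*k+m+9 from by omega,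
    show 3*k+4+m-(3*k+1) = m+3 from by omega,
    show 3*k+4+m+3*k+2 = 6*k+m+6 from by omega,
    show 2*(3*k+4+m)+2 = 6*k+2*m+10 from by omega,
    show 2*(3*k+4+m) = 6*k+2*m+8 from by omega,
    show 3*k+4+m+1-(3*k+2) = m+3 from by omega,
    show 3*k+4+m+1+1+(3*k+2) = 6*k+m+8 from by omega,
    show 3*k+4+m-(3*k+2) = m+2 from by omega,
    show 3*k+4+m+1+(3*k+2) = 6*k+m+7 from by omega,
    show 3*k+4+m+1-(3*k+3) = m+2 from by omega,
    show 3*k+4+m+1+1+(3*k+3) = 6*k+m+9 from by omega,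
    show 3*k+4+m-(3*k+3) = m+1 from by omega,
    show 3*k+4+m+1+(3*k+3) = 6*k+m+8 from by omega]
  have nzP : qPoch q q m ≠ 0 := qPoch_ne_zero hq m
  have nzQ : qPoch q q (6*k+m+6) ≠ 0 := qPoch_ne_zero hq _
  have n1 := one_sub_pow_ne hq (m+1) (by omega)
  have n2 := one_sub_pow_ne hq (m+2) (by omega)
  have n3 := one_sub_pow_ne hq (m+3) (by omega)
  have n4 := one_sub_pow_ne hq (6*k+m+7) (by omega)
  have n5 := one_sub_pow_ne hq (6*k+m+8) (by omega)
  have n6 := one_sub_pow_ne hq (6*k+m+9) (by omega)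
  have hD : qPoch q q m * qPoch q q (6*k+m+6) *
      ((1 - q^(m+1)) * (1 - q^(m+2)) * (1 - q^(m+3))) *
      ((1 - q^(6*k+m+7)) * (1 - q^(6*k+m+8)) * (1 - q^(6*k+m+9))) ≠ 0 := by
    apply_rules [mul_ne_zero]
  have t1 : qPoch q q (6*k+2*m+8) / (qPoch q q m * qPoch q q (6*k+m+9)) *
      (q ^ (3*k+4+m+6*(k+1)^2+4*(k+1)+1) * (1 - q ^ (4*(k+1)+2)) +
        q ^ (6*k+2*m+8+6*(k+1)^2+5*(k+1)+2) * (1 - q ^ (2*(k+1)+1))) =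
      qPoch q q (6*k+2*m+8) *
        (q ^ (3*k+4+m+6*(k+1)^2+4*(k+1)+1) * (1 - q ^ (4*(k+1)+2)) +
          q ^ (6*k+2*m+8+6*(k+1)^2+5*(k+1)+2) * (1 - q ^ (2*(k+1)+1))) *
        ((1 - q^(m+1)) * (1 - q^(m+2)) * (1 - q^(m+3))) /
      (qPoch q q m * qPoch q q (6*k+m+6) *
        ((1 - q^(m+1)) * (1 - q^(m+2)) * (1 - q^(m+3))) *
        ((1 - q^(6*k+m+7)) * (1 - q^(6*k+m+8)) * (1 - q^(6*k+m+9)))) := by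
    rw [f3, div_mul_eq_mul_div, div_eq_div_iff (by apply_rules [mul_ne_zero]) hD]
    ring
  have t2 : qPoch q q (6*k+2*m+8) / (qPoch q q (m+3) * qPoch q q (6*k+m+6)) *
      (q ^ (3*k+4+m+6*k^2+4*k+1) * (1 - q ^ (4*k+2)) +
        q ^ (6*k+2*m+8+6*k^2+5*k+2) * (1 - q ^ (2*k+1))) =
      qPoch q q (6*k+2*m+8) *
        (q ^ (3*k+4+m+6*k^2+4*k+1) * (1 - q ^ (4*k+2)) +
          q ^ (6*k+2*m+8+6*k^2+5*k+2) * (1 - q ^ (2*k+1))) *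
        ((1 - q^(6*k+m+7)) * (1 - q^(6*k+m+8)) * (1 - q^(6*k+m+9))) /
      (qPoch q q m * qPoch q q (6*k+m+6) *
        ((1 - q^(m+1)) * (1 - q^(m+2)) * (1 - q^(m+3))) *
        ((1 - q^(6*k+m+7)) * (1 - q^(6*k+m+8)) * (1 - q^(6*k+m+9)))) := by
    rw [e3, div_mul_eq_mul_div, div_eq_div_iff (by apply_rules [mul_ne_zero]) hD]
    ring
  have t3 : qPoch q q (6*k+2*m+10) *
      (-q ^ (6*k^2+7*k+2) * (1 - q ^ (6*k+5)) / (qPoch q q (m+3) * qPoch q q (6*k+m+8))) =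
      qPoch q q (6*k+2*m+8) * ((1 - q^(6*k+2*m+9)) * (1 - q^(6*k+2*m+10))) *
        (-q ^ (6*k^2+7*k+2) * (1 - q ^ (6*k+5))) * (1 - q^(6*k+m+9)) /
      (qPoch q q m * qPoch q q (6*k+m+6) *
        ((1 - q^(m+1)) * (1 - q^(m+2)) * (1 - q^(m+3))) *
        ((1 - q^(6*k+m+7)) * (1 - q^(6*k+m+8)) * (1 - q^(6*k+m+9)))) := by
    rw [g2, e3, f2, ← mul_div_assoc, div_eq_div_iff (by apply_rules [mul_ne_zero]) hD]
    ring
  have t4 : qPoch q q (6*k+2*m+8) *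
      (-q ^ (6*k^2+7*k+2) * (1 - q ^ (6*k+5)) / (qPoch q q (m+2) * qPoch q q (6*k+m+7))) =
      qPoch q q (6*k+2*m+8) * (-q ^ (6*k^2+7*k+2) * (1 - q ^ (6*k+5))) *
        ((1 - q^(m+3)) * ((1 - q^(6*k+m+8)) * (1 - q^(6*k+m+9)))) /
      (qPoch q q m * qPoch q q (6*k+m+6) *
        ((1 - q^(m+1)) * (1 - q^(m+2)) * (1 - q^(m+3))) *
        ((1 - q^(6*k+m+7)) * (1 - q^(6*k+m+8)) * (1 - q^(6*k+m+9)))) := by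
    rw [e2, f1, ← mul_div_assoc, div_eq_div_iff (by apply_rules [mul_ne_zero]) hD]
    ring
  have t5 : qPoch q q (6*k+2*m+10) *
      (q ^ (6*k^2+11*k+5) * (1 - q ^ (6*k+7)) / (qPoch q q (m+2) * qPoch q q (6*k+m+9))) =
      qPoch q q (6*k+2*m+8) * ((1 - q^(6*k+2*m+9)) * (1 - q^(6*k+2*m+10))) *
        (q ^ (6*k^2+11*k+5) * (1 - q ^ (6*k+7))) * (1 - q^(m+3)) /
      (qPoch q q m * qPoch q q (6*k+m+6) *
        ((1 - q^(m+1)) * (1 - q^(m+2)) * (1 - q^(m+3))) *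
        ((1 - q^(6*k+m+7)) * (1 - q^(6*k+m+8)) * (1 - q^(6*k+m+9)))) := by
    rw [g2, e2, f3, ← mul_div_assoc, div_eq_div_iff (by apply_rules [mul_ne_zero]) hD]
    ring
  have t6 : qPoch q q (6*k+2*m+8) *
      (q ^ (6*k^2+11*k+5) * (1 - q ^ (6*k+7)) / (qPoch q q (m+1) * qPoch q q (6*k+m+8))) =
      qPoch q q (6*k+2*m+8) * (q ^ (6*k^2+11*k+5) * (1 - q ^ (6*k+7))) *
        ((1 - q^(m+2)) * (1 - q^(m+3)) * (1 - q^(6*k+m+9))) /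
      (qPoch q q m * qPoch q q (6*k+m+6) *
        ((1 - q^(m+1)) * (1 - q^(m+2)) * (1 - q^(m+3))) *
        ((1 - q^(6*k+m+7)) * (1 - q^(6*k+m+8)) * (1 - q^(6*k+m+9)))) := by
    rw [e1, f2, ← mul_div_assoc, div_eq_div_iff (by apply_rules [mul_ne_zero]) hD]
    ring
  rw [t1, t2, t3, t4, t5, t6]
  rw [div_sub_div_same, ← add_div, div_sub_div_same, ← add_div]
  congr 1
  ring
end

lemma qPoch_sq (q : ℂ) (n : ℕ) :
    (1 - q) * qPoch (q*q) q n = qPoch q q (n+1) := by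
  induction n with
  | zero => simp [qPoch]
  | succ n ih =>
      rw [qPoch_succ]
      unfold qPoch at *
      rw [Finset.prod_range_succ, ← mul_assoc, ih]
      congr 1
      rw [pow_succ, pow_succ']
      ring

noncomputable def gg (q : ℂ) (n t : ℕ) : ℂ :=
  if t = 0 then 0
  else if t ≤ 2 then TT q n 0
  else if t % 3 = 2 then F2 q n ((t-2)/3)
  else if t % 3 = 0 then F2 q n ((t-3)/3) + TT q n (t-1)
  else F2 q n ((t-4)/3) + TT q n (t-2) + TT q n (t-1)

section
variable {q : ℂ}

lemma TT_mod1 {n t : ℕ} (h : t % 3 = 1) : TT q n t = 0 := by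
  simp [TT, ff, dd_mod1 h]

lemma gg_zero (n : ℕ) : gg q n 0 = 0 := by simp [gg]

lemma gg_one (n : ℕ) : gg q n 1 = TT q n 0 := by simp [gg]

lemma gg_two (n : ℕ) : gg q n 2 = TT q n 0 := by simp [gg]

lemma ggA (n k : ℕ) : gg q n (3*k+3) = F2 q n k + TT q n (3*k+2) := by
  unfold gg
  rw [if_neg (by omega), if_neg (by omega), if_neg (by omega), if_pos (by omega),
    show (3*k+3-3)/3 = k from by omega, show 3*k+3-1 = 3*k+2 from by omega]

lemma ggB (n k : ℕ) : gg q n (3*k+4) = F2 q n k + TT q n (3*k+2) + TT q n (3*k+3) := by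
  unfold gg
  rw [if_neg (by omega), if_neg (by omega), if_neg (by omega), if_neg (by omega),
    show (3*k+4-4)/3 = k from by omega, show 3*k+4-2 = 3*k+2 from by omega,
    show 3*k+4-1 = 3*k+3 from by omega]

lemma ggC (n k : ℕ) : gg q n (3*k+5) = F2 q n (k+1) := by
  unfold gg
  rw [if_neg (by omega), if_neg (by omega), if_pos (by omega),
    show (3*k+5-2)/3 = k+1 from by omega]

lemma step (hq : ∀ j : ℕ, 1 ≤ j → q ^ j ≠ 1) {n t : ℕ} (ht : t ≤ n) :
    TT q n t = gg q n (t+1) - gg q n t := by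
  by_cases h3 : t < 3
  · interval_cases t
    · rw [gg_one, gg_zero]; ring
    · rw [gg_two, gg_one, TT_mod1 (by omega)]; ring
    · obtain ⟨m, rfl⟩ : ∃ m, n = m+1 := ⟨n-1, by omega⟩
      have hA := ggA (q := q) (m+1) 0
      norm_num at hA
      rw [show (2:ℕ)+1 = 3 from rfl, hA, gg_two]
      linear_combination idI hq m
  · obtain ⟨k, hk⟩ : ∃ k, t = 3*k+3 ∨ t = 3*k+4 ∨ t = 3*k+5 := ⟨(t-3)/3, by omega⟩
    rcases hk with rfl|rfl|rfl
    · rw [show 3*k+3+1 = 3*k+4 from by ring, ggB, ggA]; ring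
    · rw [show 3*k+4+1 = 3*k+5 from by ring, ggC, ggB]
      obtain ⟨m, rfl⟩ : ∃ m, n = 3*k+4+m := ⟨n-(3*k+4), by omega⟩
      rw [TT_mod1 (show (3*k+4)%3 = 1 from by omega)]
      linear_combination - idII hq k m
    · have hA := ggA (q := q) n (k+1)
      rw [show 3*(k+1)+3 = 3*k+5+1 from by ring, show 3*(k+1)+2 = 3*k+5 from by ring] at hA
      rw [hA, ggC]; ring

lemma close (hq : ∀ j : ℕ, 1 ≤ j → q ^ j ≠ 1) (n : ℕ) :
    gg q n (n+1) + qPoch q q (2*n+2) * ff q (n+1) (n+1) = 0 := by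
  obtain ⟨k, hk⟩ : ∃ k, n = 3*k ∨ n = 3*k+1 ∨ n = 3*k+2 := ⟨n/3, by omega⟩
  rcases hk with rfl|rfl|rfl
  · cases k with
    | zero =>
      norm_num [gg_one]
      have hf : ff q 1 1 = 0 := by simp [ff, dd_mod1 (show 1 % 3 = 1 from rfl)]
      rw [hf, mul_zero, add_zero]
      have n1 : (1:ℂ) - q ≠ 0 := by
        have := one_sub_pow_ne hq 1 le_rfl; rwa [pow_one] at this
      have h2 : qPoch q q 2 ≠ 0 := qPoch_ne_zero hq 2
      simp only [TT, ff]
      norm_num [qPoch_zero, qPoch_one]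
      rw [qPoch_two]
      have n2 : (1:ℂ) - q^2 ≠ 0 := one_sub_pow_ne hq 2 (by omega)
      field_simp
      ring
    | succ j =>
      rw [show 3*(j+1) = 3*j+3 from by ring, show 3*j+3+1 = 3*j+4 from by ring, ggB]
      have hf : ff q (3*j+3+1) (3*j+3+1) = 0 := by
        simp [ff, dd_mod1 (show (3*j+3+1) % 3 = 1 from by omega)]
      rw [hf, mul_zero, add_zero]
      exact close0 hq j
  · cases k with
    | zero =>
      norm_num [gg_two]
      have h := close1 hq 0
      norm_num at h
      have hI := idI hq 0
      norm_num at hI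
      linear_combination h + hI
    | succ j =>
      rw [show 3*(j+1)+1 = 3*j+4 from by ring, show 3*j+4+1 = 3*j+5 from by ring, ggC]
      have h := close1 hq (j+1)
      rw [show 3*(j+1)+1 = 3*j+4 from by ring, show 3*j+4+1 = 3*j+5 from by ring] at h
      linear_combination h
  · rw [show 3*k+2+1 = 3*k+3 from by ring, ggA]
    have h := close2 hq k
    rw [show 3*k+2+1 = 3*k+3 from by ring] at h
    linear_combination h

lemma main (hq : ∀ j : ℕ, 1 ≤ j → q ^ j ≠ 1) :
    ∀ n, ∑ t ∈ Finset.range (n+1), ff q n t = 1 / qPoch q q (2*n) := by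
  intro n
  induction n with
  | zero =>
    rw [Finset.sum_range_one]
    have n1 : (1:ℂ) - q ≠ 0 := by
      have := one_sub_pow_ne hq 1 le_rfl; rwa [pow_one] at this
    simp only [ff, dd]
    norm_num [qPoch_zero, qPoch_one]
    exact n1
  | succ n ih =>
    have hP2 : qPoch q q (2*n+2) ≠ 0 := qPoch_ne_zero hq _
    have hP : qPoch q q (2*n) ≠ 0 := qPoch_ne_zero hq _
    have key : qPoch q q (2*n+2) * ∑ t ∈ Finset.range (n+1+1), ff q (n+1) t = 1 := by
      rw [Finset.sum_range_succ, mul_add, Finset.mul_sum]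
      have e : ∀ t ∈ Finset.range (n+1), qPoch q q (2*n+2) * ff q (n+1) t
          = (gg q n (t+1) - gg q n t) + qPoch q q (2*n) * ff q n t := by
        intro t ht
        have hs := step hq (Nat.lt_succ_iff.mp (Finset.mem_range.mp ht))
        simp only [TT] at hs
        linear_combination hs
      rw [Finset.sum_congr rfl e, Finset.sum_add_distrib, Finset.sum_range_sub (gg q n),
        ← Finset.mul_sum, ih, gg_zero]
      have hcl := close hq n
      rw [mul_one_div, div_self hP]
      linear_combination hcl
    rw [show 2*(n+1) = 2*n+2 from by ring, eq_div_iff hP2]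
    linear_combination key
end
end BP1

open BP1 in
theorem bailey_pair_1 (q : ℂ) (hq0 : 0 < ‖q‖) (hq1 : ‖q‖ < 1) :
    (IsBaileyPair q q
      (fun m => (1 - q ^ (2 * m + 1)) / (1 - q) *
        (if m % 3 = 0 then q ^ ((2 * m ^ 2 - m) / 3)
          else if m % 3 = 2 then -q ^ ((2 * m ^ 2 - m) / 3) else 0))
      (fun n => 1 / qPoch q q (2 * n))) ∧
    (∀ m : ℕ,
      (1 - q) / (1 - q ^ (2 * m + 1)) *
        ((1 - q ^ (2 * m + 1)) / (1 - q) *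
          (if m % 3 = 0 then q ^ ((2 * m ^ 2 - m) / 3)
            else if m % 3 = 2 then -q ^ ((2 * m ^ 2 - m) / 3) else 0)) =
      (if m % 3 = 0 then q ^ ((2 * m ^ 2 - m) / 3)
        else if m % 3 = 2 then -q ^ ((2 * m ^ 2 - m) / 3) else 0)) := by
  have hq : ∀ j : ℕ, 1 ≤ j → q ^ j ≠ 1 := by
    intro j hj h
    have h1 : ‖q ^ j‖ = 1 := by rw [h]; simp
    rw [norm_pow] at h1
    have h2 : ‖q‖ ^ j < 1 := by
      calc ‖q‖ ^ j ≤ ‖q‖ ^ 1 :=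
            pow_le_pow_of_le_one (norm_nonneg q) hq1.le hj
        _ = ‖q‖ := pow_one _
        _ < 1 := hq1
    rw [h1] at h2
    exact lt_irrefl 1 h2
  have n1 : (1:ℂ) - q ≠ 0 := by
    have := one_sub_pow_ne hq 1 le_rfl; rwa [pow_one] at this
  constructor
  · intro n
    rw [show (fun n => 1 / qPoch q q (2 * n)) n = 1 / qPoch q q (2 * n) from rfl,
      ← main hq n]
    refine Finset.sum_congr rfl fun t _ => ?_
    have hsq : qPoch q q (n+1+t) = (1-q) * qPoch (q*q) q (n+t) := by
      rw [show n+1+t = (n+t)+1 from by ring, ← qPoch_sq]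
    simp only [ff, dd]
    rw [hsq, div_mul_eq_mul_div, div_div]
    congr 1
    · ring
    · ring
  · intro m
    by_cases h : m % 3 = 0
    · simp only [if_pos h]
      have h2 : (1:ℂ) - q^(2*m+1) ≠ 0 := one_sub_pow_ne hq (2*m+1) (by omega)
      field_simp
    · by_cases h2 : m % 3 = 2
      · simp only [if_neg h, if_pos h2]
        have h3 : (1:ℂ) - q^(2*m+1) ≠ 0 := one_sub_pow_ne hq (2*m+1) (by omega)
        field_simp
      · simp [if_neg h, if_neg h2]
end

section
/- Bailey pair #2 (shifted Slater A2): The sequences β_n = 1/(q²;q)_{2n} and α_m defined by α_m = ((1 − q^{2m+2})/(1 − q²)) · c_m, where c_m = q^{(2m²+m)/3} if m ≡ 0 (mod 3), c_m = −q^{(2m²+m)/3} if m ≡ 1 (mod 3), and c_m = 0 if m ≡ 2 (mod 3), form a Bailey pair with respect to base a = q². -/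
open Finset

namespace BP2

noncomputable def gb (q : ℂ) : ℕ → ℤ → ℂ
  | 0, k => if k = 0 then 1 else 0
  | N+1, k => gb q N (k-1) + q^(k.toNat) * gb q N k

variable (q : ℂ)

lemma gb_succ (N : ℕ) (k : ℤ) : gb q (N+1) k = gb q N (k-1) + q^(k.toNat) * gb q N k := by
  simp [gb]

lemma gb_neg : ∀ (N : ℕ) (k : ℤ), k < 0 → gb q N k = 0 := by
  intro N
  induction N with
  | zero => intro k hk; simp [gb]; omega
  | succ N ih => intro k hk; rw [gb_succ, ih _ (by omega), ih _ hk]; ring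

lemma gb_gt : ∀ (N : ℕ) (k : ℤ), (N:ℤ) < k → gb q N k = 0 := by
  intro N
  induction N with
  | zero => intro k hk; simp [gb]; omega
  | succ N ih =>
    intro k hk
    rw [gb_succ, ih _ (by push_cast at hk ⊢; omega), ih _ (by push_cast at hk ⊢; omega)]
    ring

lemma gb_zero_col : ∀ (N : ℕ), gb q N 0 = 1 := by
  intro N
  induction N with
  | zero => simp [gb]
  | succ N ih =>
    rw [gb_succ, gb_neg q N _ (by omega), ih]
    simp

lemma gb_diag : ∀ (N : ℕ), gb q N (N:ℤ) = 1 := by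
  intro N
  induction N with
  | zero => simp [gb]
  | succ N ih =>
    rw [gb_succ, show ((N+1:ℕ):ℤ) - 1 = (N:ℤ) by push_cast; ring, ih,
      gb_gt q N ((N+1:ℕ):ℤ) (by push_cast; omega)]
    ring

lemma pascalA (N c : ℕ) : gb q (N+1) (c:ℤ) = gb q N ((c:ℤ)-1) + q^c * gb q N (c:ℤ) := by
  simp [gb]

lemma pascal2 : ∀ (N : ℕ) (k : ℤ), gb q (N+1) k = q^(((N:ℤ)+1-k).toNat) * gb q N (k-1) + gb q N k := by
  intro N
  induction N with
  | zero =>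
    intro k
    rcases eq_or_ne k 0 with rfl | h0
    · simp [gb]
    rcases eq_or_ne k 1 with rfl | h1
    · simp [gb]
    simp only [gb]
    rw [if_neg h0, if_neg (by omega : k - 1 ≠ 0)]
    ring
  | succ N ih =>
    intro k
    have hdef2 := gb_succ q (N+1) k
    have hdef1 := gb_succ q N (k-1)
    have hdef1k := gb_succ q N k
    have hih1 := ih (k-1)
    have hih := ih k
    have he1 : ((N:ℤ)+1-(k-1)).toNat = ((N:ℤ)+2-k).toNat := by omega
    rw [he1] at hih1
    have hc : ((N+1:ℕ):ℤ) + 1 - k = (N:ℤ)+2-k := by push_cast; ring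
    rw [hc]
    have hkk : k - 1 - 1 = k - 2 := by ring
    rw [hkk] at hdef1 hih1
    have key : q^(k.toNat) * (q^(((N:ℤ)+1-k).toNat) * gb q N (k-1))
        = q^(((N:ℤ)+2-k).toNat) * (q^((k-1).toNat) * gb q N (k-1)) := by
      by_cases hk : 1 ≤ k ∧ k ≤ (N:ℤ)+1
      · have hee : k.toNat + ((N:ℤ)+1-k).toNat = ((N:ℤ)+2-k).toNat + (k-1).toNat := by omega
        calc q^(k.toNat) * (q^(((N:ℤ)+1-k).toNat) * gb q N (k-1))
            = q^(k.toNat + ((N:ℤ)+1-k).toNat) * gb q N (k-1) := by rw [pow_add]; ring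
          _ = q^(((N:ℤ)+2-k).toNat + (k-1).toNat) * gb q N (k-1) := by rw [hee]
          _ = q^(((N:ℤ)+2-k).toNat) * (q^((k-1).toNat) * gb q N (k-1)) := by rw [pow_add]; ring
      · rcases (by omega : k < 1 ∨ (N:ℤ)+1 < k) with h | h
        · rw [gb_neg q N (k-1) (by omega)]; ring
        · rw [gb_gt q N (k-1) (by omega)]; ring
    linear_combination hdef2 + hih1 + q^(k.toNat) * hih - q^(((N:ℤ)+2-k).toNat) * hdef1 - hdef1k + key

lemma pascalB (N c : ℕ) (h : c ≤ N+1) :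
    gb q (N+1) (c:ℤ) = q^(N+1-c) * gb q N ((c:ℤ)-1) + gb q N (c:ℤ) := by
  rw [pascal2, (by omega : ((N:ℤ)+1-(c:ℤ)).toNat = N+1-c)]

lemma pq_succ (m : ℕ) : qPoch q q (m+1) = qPoch q q m * (1 - q^(m+1)) := by
  unfold qPoch
  rw [Finset.prod_range_succ]
  ring

lemma p2_succ (M : ℕ) : qPoch (q^2) q (M+1) = qPoch (q^2) q M * (1 - q^(M+2)) := by
  unfold qPoch
  rw [Finset.prod_range_succ]
  ring

lemma p3_succ (M : ℕ) : qPoch (q^2*q) q (M+1) = qPoch (q^2*q) q M * (1 - q^(M+3)) := by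
  unfold qPoch
  rw [Finset.prod_range_succ]
  ring

lemma p2_eq (M : ℕ) : (1 - q) * qPoch (q^2) q M = qPoch q q (M+1) := by
  induction M with
  | zero =>
    unfold qPoch
    rw [Finset.prod_range_zero, Finset.prod_range_succ, Finset.prod_range_zero]
    ring
  | succ M ih =>
    rw [p2_succ, pq_succ q (M+1)]
    linear_combination (1 - q^(M+2)) * ih

lemma p3_eq (M : ℕ) : (1 - q) * (1 - q^2) * qPoch (q^2*q) q M = qPoch q q (M+2) := by
  induction M with
  | zero =>
    unfold qPoch
    rw [Finset.prod_range_zero, Finset.prod_range_succ, Finset.prod_range_succ,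
      Finset.prod_range_zero]
    ring
  | succ M ih =>
    rw [p3_succ, pq_succ q (M+2)]
    linear_combination (1 - q^(M+3)) * ih

lemma one_sub_ne (hq1 : ‖q‖ < 1) (k : ℕ) (hk : 1 ≤ k) : (1:ℂ) - q^k ≠ 0 := by
  intro h
  have h1 : q^k = 1 := by linear_combination -h
  have h2 : ‖q^k‖ = 1 := by rw [h1]; simp
  rw [norm_pow] at h2
  have : ‖q‖ ^ k < 1 := pow_lt_one₀ (norm_nonneg q) hq1 (by omega)
  rw [h2] at this
  exact lt_irrefl 1 this

lemma pq_ne (hq1 : ‖q‖ < 1) (m : ℕ) : qPoch q q m ≠ 0 := by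
  unfold qPoch
  rw [Finset.prod_ne_zero_iff]
  intro t _
  have := one_sub_ne q hq1 (t+1) (by omega)
  rw [pow_succ'] at this
  exact this

lemma p2_ne (hq1 : ‖q‖ < 1) (m : ℕ) : qPoch (q^2) q m ≠ 0 := by
  intro h
  have := p2_eq q m
  rw [h, mul_zero] at this
  exact pq_ne q hq1 (m+1) this.symm

lemma p3_ne (hq1 : ‖q‖ < 1) (m : ℕ) : qPoch (q^2*q) q m ≠ 0 := by
  intro h
  have := p3_eq q m
  rw [h, mul_zero] at this
  exact pq_ne q hq1 (m+2) this.symm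

lemma gb_mul : ∀ (N k : ℕ), k ≤ N → gb q N (k:ℤ) * (qPoch q q k * qPoch q q (N-k)) = qPoch q q N := by
  intro N
  induction N with
  | zero =>
    intro k hk
    interval_cases k
    simp [gb, qPoch]
  | succ N ih =>
    intro k hk
    rcases Nat.eq_or_lt_of_le hk with rfl | hlt
    · rw [gb_diag q, Nat.sub_self]
      simp [qPoch]
    · rcases k with _ | j
      · rw [show ((0:ℕ):ℤ) = (0:ℤ) by norm_num, gb_zero_col q, Nat.sub_zero]
        simp [qPoch]
      · have hj : j + 1 ≤ N := by omega
        obtain ⟨i, hi⟩ : ∃ i, N = j + 1 + i := ⟨N - (j+1), by omega⟩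
        subst hi
        have h1 := ih j (by omega)
        have h2 := ih (j+1) (by omega)
        have hp := pascalA q (j+1+i) (j+1)
        rw [show ((j+1:ℕ):ℤ) - 1 = (j:ℤ) by push_cast; ring] at hp
        rw [show j+1+i - j = i+1 from by omega] at h1
        rw [show j+1+i - (j+1) = i from by omega] at h2
        rw [show j+1+i+1 - (j+1) = i+1 from by omega, hp]
        rw [pq_succ q (j+1+i), pq_succ q j, pq_succ q i] at *
        linear_combination (1 - q^(j+1)) * h1 + q^(j+1) * (1 - q^(i+1)) * h2

lemma ratio1 (hq1 : ‖q‖ < 1) (N k : ℕ) (h : k ≤ N) :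
    gb q (N+1) (k:ℤ) * (1 - q^(N+1-k)) = (1 - q^(N+1)) * gb q N (k:ℤ) := by
  have h1 := gb_mul q (N+1) k (by omega)
  have h2 := gb_mul q N k h
  rw [show N+1-k = (N-k)+1 from by omega, pq_succ q (N-k), pq_succ q N] at h1
  have hne : qPoch q q k * qPoch q q (N-k) ≠ 0 :=
    mul_ne_zero (pq_ne q hq1 k) (pq_ne q hq1 (N-k))
  apply mul_right_cancel₀ hne
  rw [show N+1-k = (N-k)+1 from by omega]
  linear_combination h1 - (1 - q^(N+1)) * h2

lemma ratio2 (hq1 : ‖q‖ < 1) (N k : ℕ) (h : k ≤ N+1) :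
    gb q (N+1) (k:ℤ) * (1 - q^k) = (1 - q^(N+1)) * gb q N ((k:ℤ)-1) := by
  rcases k with _ | j
  · simp [gb_neg q N (-1) (by omega)]
  · have h1 := gb_mul q (N+1) (j+1) h
    have h2 := gb_mul q N j (by omega)
    rw [show N+1-(j+1) = N-j from by omega, pq_succ q j, pq_succ q N] at h1
    have hne : qPoch q q j * qPoch q q (N-j) ≠ 0 :=
      mul_ne_zero (pq_ne q hq1 j) (pq_ne q hq1 (N-j))
    apply mul_right_cancel₀ hne
    rw [show ((j+1:ℕ):ℤ) - 1 = (j:ℤ) by push_cast; ring]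
    linear_combination h1 - (1 - q^(N+1)) * h2

lemma gb_symm (hq1 : ‖q‖ < 1) (N k : ℕ) (h : k ≤ N) :
    gb q N (k:ℤ) = gb q N ((N-k:ℕ):ℤ) := by
  have h1 := gb_mul q N k h
  have h2 := gb_mul q N (N-k) (by omega)
  rw [show N-(N-k) = k from by omega] at h2
  have hne : qPoch q q k * qPoch q q (N-k) ≠ 0 :=
    mul_ne_zero (pq_ne q hq1 k) (pq_ne q hq1 (N-k))
  apply mul_right_cancel₀ hne
  rw [h1]
  linear_combination -h2

noncomputable def ee (q : ℂ) (t : ℕ) : ℂ :=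
  if t % 3 = 0 then q^(6*(t/3)^2 + t/3)
  else if t % 3 = 1 then -(q^(6*(t/3)^2+5*(t/3)+1) + q^(6*(t/3)^2+7*(t/3)+2))
  else q^(6*(t/3)^2+11*(t/3)+5)

noncomputable def ff (q : ℂ) (t : ℕ) : ℂ :=
  if t = 0 then 1
  else if t % 3 = 0 then q^(6*(t/3)^2 + t/3) + q^(6*((t-1)/3)^2+11*((t-1)/3)+5)
  else if t % 3 = 1 then -q^(6*(t/3)^2+5*(t/3)+1)
  else -q^(6*(t/3)^2+7*(t/3)+2)

noncomputable def H1 (q : ℂ) (n : ℕ) (t : ℕ) : ℂ :=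
  if t = 0 then 0
  else if t % 3 = 1 then q^(6*(t/3)^2+4*(t/3)+1+n) * gb q (2*n) ((n:ℤ) - 3*((t/3 : ℕ):ℤ) - 1)
  else if t % 3 = 2 then
    -(q^(6*(t/3)^2+7*(t/3)+2) + q^(6*(t/3)^2+8*(t/3)+3+n)) * gb q (2*n) ((n:ℤ) - 3*((t/3 : ℕ):ℤ) - 2)
  else q^(6*((t-1)/3)^2+11*((t-1)/3)+5) * gb q (2*n) ((n:ℤ) - 3*((t/3 : ℕ):ℤ))

noncomputable def H2 (q : ℂ) (p : ℕ) (t : ℕ) : ℂ :=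
  if t = 0 then 0
  else if t % 3 = 1 then q^(6*(t/3)^2+2*(t/3)+p+1) * gb q (2*p+1) ((p:ℤ) - 3*((t/3 : ℕ):ℤ))
  else if t % 3 = 2 then q^(6*(t/3)^2+7*(t/3)+2) * gb q (2*p+1) ((p:ℤ) - 3*((t/3 : ℕ):ℤ) - 1)
  else -(q^(6*((t-1)/3)^2+10*((t-1)/3)+5+p) + q^(6*((t-1)/3)^2+11*((t-1)/3)+5))
        * gb q (2*p+1) ((p:ℤ) - 3*(((t-1)/3 : ℕ):ℤ) - 2)

-- eval lemmas
lemma ee_0 (k : ℕ) : ee q (3*k) = q^(6*k^2+k) := by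
  simp only [ee]
  rw [show (3*k)%3 = 0 from by omega, if_pos rfl, show (3*k)/3 = k from by omega]

lemma ee_1 (k : ℕ) : ee q (3*k+1) = -(q^(6*k^2+5*k+1) + q^(6*k^2+7*k+2)) := by
  simp only [ee]
  rw [show (3*k+1)%3 = 1 from by omega, if_neg (by norm_num), if_pos rfl,
    show (3*k+1)/3 = k from by omega]

lemma ee_2 (k : ℕ) : ee q (3*k+2) = q^(6*k^2+11*k+5) := by
  simp only [ee]
  rw [show (3*k+2)%3 = 2 from by omega, if_neg (by norm_num), if_neg (by norm_num),
    show (3*k+2)/3 = k from by omega]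

lemma ee_3 (v : ℕ) : ee q (3*v+3) = q^(6*(v+1)^2+(v+1)) := by
  simp only [ee]
  rw [show (3*v+3)%3 = 0 from by omega, if_pos rfl, show (3*v+3)/3 = v+1 from by omega]

lemma ff_zero : ff q 0 = 1 := by simp [ff]

lemma ff_1 (k : ℕ) : ff q (3*k+1) = -q^(6*k^2+5*k+1) := by
  simp only [ff]
  rw [if_neg (by omega : ¬(3*k+1 = 0)), show (3*k+1)%3 = 1 from by omega,
    if_neg (by norm_num), if_pos rfl, show (3*k+1)/3 = k from by omega]

lemma ff_2 (k : ℕ) : ff q (3*k+2) = -q^(6*k^2+7*k+2) := by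
  simp only [ff]
  rw [if_neg (by omega : ¬(3*k+2 = 0)), show (3*k+2)%3 = 2 from by omega,
    if_neg (by norm_num), if_neg (by norm_num), show (3*k+2)/3 = k from by omega]

lemma ff_3 (v : ℕ) : ff q (3*v+3) = q^(6*(v+1)^2+(v+1)) + q^(6*v^2+11*v+5) := by
  simp only [ff]
  rw [if_neg (by omega : ¬(3*v+3 = 0)), show (3*v+3)%3 = 0 from by omega, if_pos rfl,
    show (3*v+3)/3 = v+1 from by omega, show (3*v+3-1)/3 = v from by omega]

lemma H1_0 (n : ℕ) : H1 q n 0 = 0 := by simp [H1]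

lemma H1_1 (n k : ℕ) : H1 q n (3*k+1) =
    q^(6*k^2+4*k+1+n) * gb q (2*n) ((n:ℤ) - 3*((k:ℕ):ℤ) - 1) := by
  simp only [H1]
  rw [if_neg (by omega : ¬(3*k+1 = 0)), show (3*k+1)%3 = 1 from by omega, if_pos rfl,
    show (3*k+1)/3 = k from by omega]

lemma H1_2 (n k : ℕ) : H1 q n (3*k+2) =
    -(q^(6*k^2+7*k+2) + q^(6*k^2+8*k+3+n)) * gb q (2*n) ((n:ℤ) - 3*((k:ℕ):ℤ) - 2) := by
  simp only [H1]
  rw [if_neg (by omega : ¬(3*k+2 = 0)), show (3*k+2)%3 = 2 from by omega,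
    if_neg (by norm_num), if_pos rfl, show (3*k+2)/3 = k from by omega]

lemma H1_3 (n v : ℕ) : H1 q n (3*v+3) =
    q^(6*v^2+11*v+5) * gb q (2*n) ((n:ℤ) - 3*(((v+1):ℕ):ℤ)) := by
  simp only [H1]
  rw [if_neg (by omega : ¬(3*v+3 = 0)), show (3*v+3)%3 = 0 from by omega,
    if_neg (by norm_num), if_neg (by norm_num), show (3*v+3)/3 = v+1 from by omega,
    show (3*v+3-1)/3 = v from by omega]

lemma H2_0 (p : ℕ) : H2 q p 0 = 0 := by simp [H2]

lemma H2_1 (p k : ℕ) : H2 q p (3*k+1) =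
    q^(6*k^2+2*k+p+1) * gb q (2*p+1) ((p:ℤ) - 3*((k:ℕ):ℤ)) := by
  simp only [H2]
  rw [if_neg (by omega : ¬(3*k+1 = 0)), show (3*k+1)%3 = 1 from by omega, if_pos rfl,
    show (3*k+1)/3 = k from by omega]

lemma H2_2 (p k : ℕ) : H2 q p (3*k+2) =
    q^(6*k^2+7*k+2) * gb q (2*p+1) ((p:ℤ) - 3*((k:ℕ):ℤ) - 1) := by
  simp only [H2]
  rw [if_neg (by omega : ¬(3*k+2 = 0)), show (3*k+2)%3 = 2 from by omega,
    if_neg (by norm_num), if_pos rfl, show (3*k+2)/3 = k from by omega]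

lemma H2_3 (p v : ℕ) : H2 q p (3*v+3) =
    -(q^(6*v^2+10*v+5+p) + q^(6*v^2+11*v+5)) * gb q (2*p+1) ((p:ℤ) - 3*((v:ℕ):ℤ) - 2) := by
  simp only [H2]
  rw [if_neg (by omega : ¬(3*v+3 = 0)), show (3*v+3)%3 = 0 from by omega,
    if_neg (by norm_num), if_neg (by norm_num), show (3*v+3-1)/3 = v from by omega]

-- Step 1 keys
lemma key1_t0 (d : ℕ) :
    ee q 0 * gb q (2*d+1) (d:ℤ) - ff q 0 * gb q (2*d) (d:ℤ) = H1 q d 1 - H1 q d 0 := by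
  have hB := pascalB q (2*d) d (by omega)
  rw [show 2*d+1-d = d+1 from by omega] at hB
  have h1 := H1_1 q d 0
  rw [show 3*0+1 = 1 from by norm_num,
    show (d:ℤ)-3*((0:ℕ):ℤ)-1 = (d:ℤ)-1 by push_cast; ring] at h1
  have he := ee_0 q 0
  rw [show 3*0 = 0 from by norm_num] at he
  rw [h1, H1_0, he, ff_zero, hB]
  ring

lemma key1_3 (v d : ℕ) :
    ee q (3*v+3) * gb q (2*(3*v+3+d)+1) (d:ℤ) - ff q (3*v+3) * gb q (2*(3*v+3+d)) (d:ℤ)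
      = H1 q (3*v+3+d) (3*(v+1)+1) - H1 q (3*v+3+d) (3*v+3) := by
  have hB := pascalB q (2*(3*v+3+d)) d (by omega)
  rw [show 2*(3*v+3+d)+1-d = 6*v+7+d from by omega] at hB
  rw [ee_3, ff_3, H1_1, H1_3]
  rw [show ((3*v+3+d:ℕ):ℤ)-3*(((v+1):ℕ):ℤ)-1 = (d:ℤ)-1 by push_cast; ring]
  rw [show ((3*v+3+d:ℕ):ℤ)-3*(((v+1):ℕ):ℤ) = (d:ℤ) by push_cast; ring]
  linear_combination q^(6*(v+1)^2+(v+1)) * hB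

lemma key1_1 (k d : ℕ) :
    ee q (3*k+1) * gb q (2*(3*k+1+d)+1) (d:ℤ) - ff q (3*k+1) * gb q (2*(3*k+1+d)) (d:ℤ)
      = H1 q (3*k+1+d) (3*k+2) - H1 q (3*k+1+d) (3*k+1) := by
  have hA := pascalA q (2*(3*k+1+d)) d
  have hB := pascalB q (2*(3*k+1+d)) d (by omega)
  rw [show 2*(3*k+1+d)+1-d = 6*k+3+d from by omega] at hB
  rw [ee_1, ff_1, H1_2, H1_1]
  rw [show ((3*k+1+d:ℕ):ℤ)-3*((k:ℕ):ℤ)-2 = (d:ℤ)-1 by push_cast; ring]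
  rw [show ((3*k+1+d:ℕ):ℤ)-3*((k:ℕ):ℤ)-1 = (d:ℤ) by push_cast; ring]
  linear_combination (-(q^(6*k^2+7*k+2))) * hA + (-(q^(6*k^2+5*k+1))) * hB

lemma key1_2 (k d : ℕ) :
    ee q (3*k+2) * gb q (2*(3*k+2+d)+1) (d:ℤ) - ff q (3*k+2) * gb q (2*(3*k+2+d)) (d:ℤ)
      = H1 q (3*k+2+d) (3*k+3) - H1 q (3*k+2+d) (3*k+2) := by
  have hA := pascalA q (2*(3*k+2+d)) d
  rw [ee_2, ff_2, H1_3, H1_2]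
  rw [show ((3*k+2+d:ℕ):ℤ)-3*(((k+1):ℕ):ℤ) = (d:ℤ)-1 by push_cast; ring]
  rw [show ((3*k+2+d:ℕ):ℤ)-3*((k:ℕ):ℤ)-2 = (d:ℤ) by push_cast; ring]
  linear_combination q^(6*k^2+11*k+5) * hA

lemma key1 (n t : ℕ) (ht : t ≤ n) :
    ee q t * gb q (2*n+1) ((n:ℤ)-t) - ff q t * gb q (2*n) ((n:ℤ)-t)
      = H1 q n (t+1) - H1 q n t := by
  obtain ⟨d, rfl⟩ : ∃ d, n = t + d := ⟨n - t, by omega⟩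
  have hcol : ((t+d:ℕ):ℤ) - (t:ℤ) = ((d:ℕ):ℤ) := by push_cast; ring
  rw [hcol]
  rcases (by omega : t = 0 ∨ (t % 3 = 0 ∧ t ≠ 0) ∨ t % 3 = 1 ∨ t % 3 = 2) with rfl | ⟨h3, h0⟩ | h1 | h2
  · simpa using key1_t0 q d
  · obtain ⟨v, rfl⟩ : ∃ v, t = 3*v+3 := ⟨t/3 - 1, by omega⟩
    have := key1_3 q v d
    rw [show 3*(v+1)+1 = 3*v+3+1 from by ring] at this
    exact this
  · obtain ⟨k, rfl⟩ : ∃ k, t = 3*k+1 := ⟨t/3, by omega⟩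
    have := key1_1 q k d
    rw [show 3*k+2 = 3*k+1+1 from by ring] at this
    exact this
  · obtain ⟨k, rfl⟩ : ∃ k, t = 3*k+2 := ⟨t/3, by omega⟩
    have := key1_2 q k d
    rw [show 3*k+3 = 3*k+2+1 from by ring] at this
    exact this

lemma H1_top (n : ℕ) : H1 q n (n+1) = 0 := by
  rcases (by omega : n % 3 = 0 ∨ n % 3 = 1 ∨ n % 3 = 2) with h | h | h
  · obtain ⟨k, rfl⟩ : ∃ k, n = 3*k := ⟨n/3, by omega⟩
    rw [H1_1, gb_neg q _ _ (by push_cast; omega), mul_zero]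
  · obtain ⟨k, rfl⟩ : ∃ k, n = 3*k+1 := ⟨n/3, by omega⟩
    rw [H1_2, gb_neg q _ _ (by push_cast; omega), mul_zero]
  · obtain ⟨v, rfl⟩ : ∃ v, n = 3*v+2 := ⟨n/3, by omega⟩
    rw [show 3*v+2+1 = 3*v+3 from by ring, H1_3, gb_neg q _ _ (by push_cast; omega), mul_zero]

lemma step1 (n : ℕ)
    (hE : ∑ t ∈ Finset.range (n+1), ff q t * gb q (2*n) ((n:ℤ)-t) = 1) :
    ∑ t ∈ Finset.range (n+1), ee q t * gb q (2*n+1) ((n:ℤ)-t) = 1 := by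
  have key : ∀ t ∈ Finset.range (n+1),
      ee q t * gb q (2*n+1) ((n:ℤ)-t)
        = ff q t * gb q (2*n) ((n:ℤ)-t) + (H1 q n (t+1) - H1 q n t) := by
    intro t htm
    have h := key1 q n t (by have := Finset.mem_range.mp htm; omega)
    linear_combination h
  rw [Finset.sum_congr rfl key, Finset.sum_add_distrib, hE,
    Finset.sum_range_sub (H1 q n) (n+1), H1_top, H1_0]
  ring

-- Step 2 keys
lemma key2_t0 (hq1 : ‖q‖ < 1) (p : ℕ) :
    ff q 0 * gb q (2*p+2) ((p:ℤ)+1) - ee q 0 * gb q (2*p+1) ((p:ℤ)) = H2 q p 1 - H2 q p 0 := by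
  have hA := pascalA q (2*p+1) (p+1)
  rw [show ((p+1:ℕ):ℤ) = (p:ℤ)+1 by push_cast; ring] at hA
  rw [show (p:ℤ)+1-1 = (p:ℤ) by ring] at hA
  have hsym := gb_symm q hq1 (2*p+1) (p+1) (by omega)
  rw [show 2*p+1-(p+1) = p from by omega] at hsym
  rw [show ((p+1:ℕ):ℤ) = (p:ℤ)+1 by push_cast; ring] at hsym
  have h1 := H2_1 q p 0
  rw [show 3*0+1 = 1 from by norm_num] at h1
  rw [h1, H2_0, show ee q 0 = q^(6*0^2+0) from by simpa using ee_0 q 0, ff_zero]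
  rw [show (p:ℤ)-3*((0:ℕ):ℤ) = (p:ℤ) by push_cast; ring]
  rw [show 2*p+1+1 = 2*p+2 from by ring] at hA
  rw [hA, hsym]
  ring

lemma key2_3 (v d : ℕ) :
    ff q (3*v+3) * gb q (2*(3*v+2+d)+2) (d:ℤ) - ee q (3*v+3) * gb q (2*(3*v+2+d)+1) ((d:ℤ)-1)
      = H2 q (3*v+2+d) (3*(v+1)+1) - H2 q (3*v+2+d) (3*v+3) := by
  have hA := pascalA q (2*(3*v+2+d)+1) d
  have hB := pascalB q (2*(3*v+2+d)+1) d (by omega)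
  rw [show 2*(3*v+2+d)+1+1-d = 6*v+6+d from by omega] at hB
  rw [show 2*(3*v+2+d)+1+1 = 2*(3*v+2+d)+2 from by ring] at hA hB
  rw [ee_3, ff_3, H2_1, H2_3]
  rw [show ((3*v+2+d:ℕ):ℤ)-3*(((v+1):ℕ):ℤ) = (d:ℤ)-1 by push_cast; ring]
  rw [show ((3*v+2+d:ℕ):ℤ)-3*((v:ℕ):ℤ)-2 = (d:ℤ) by push_cast; ring]
  linear_combination q^(6*(v+1)^2+(v+1)) * hA + q^(6*v^2+11*v+5) * hB

lemma key2_1 (k d : ℕ) :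
    ff q (3*k+1) * gb q (2*(3*k+d)+2) (d:ℤ) - ee q (3*k+1) * gb q (2*(3*k+d)+1) ((d:ℤ)-1)
      = H2 q (3*k+d) (3*k+2) - H2 q (3*k+d) (3*k+1) := by
  have hA := pascalA q (2*(3*k+d)+1) d
  rw [show 2*(3*k+d)+1+1 = 2*(3*k+d)+2 from by ring] at hA
  rw [ee_1, ff_1, H2_2, H2_1]
  rw [show ((3*k+d:ℕ):ℤ)-3*((k:ℕ):ℤ)-1 = (d:ℤ)-1 by push_cast; ring]
  rw [show ((3*k+d:ℕ):ℤ)-3*((k:ℕ):ℤ) = (d:ℤ) by push_cast; ring]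
  linear_combination (-(q^(6*k^2+5*k+1))) * hA

lemma key2_2 (k d : ℕ) :
    ff q (3*k+2) * gb q (2*(3*k+1+d)+2) (d:ℤ) - ee q (3*k+2) * gb q (2*(3*k+1+d)+1) ((d:ℤ)-1)
      = H2 q (3*k+1+d) (3*k+3) - H2 q (3*k+1+d) (3*k+2) := by
  have hB := pascalB q (2*(3*k+1+d)+1) d (by omega)
  rw [show 2*(3*k+1+d)+1+1-d = 6*k+4+d from by omega] at hB
  rw [show 2*(3*k+1+d)+1+1 = 2*(3*k+1+d)+2 from by ring] at hB
  rw [ee_2, ff_2, H2_3, H2_2]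
  rw [show ((3*k+1+d:ℕ):ℤ)-3*((k:ℕ):ℤ)-2 = (d:ℤ)-1 by push_cast; ring]
  rw [show ((3*k+1+d:ℕ):ℤ)-3*((k:ℕ):ℤ)-1 = (d:ℤ) by push_cast; ring]
  linear_combination (-(q^(6*k^2+7*k+2))) * hB

lemma key2 (hq1 : ‖q‖ < 1) (p t : ℕ) (ht : t ≤ p+1) :
    ff q t * gb q (2*p+2) ((p:ℤ)+1-t) - ee q t * gb q (2*p+1) ((p:ℤ)-t)
      = H2 q p (t+1) - H2 q p t := by
  rcases (by omega : t = 0 ∨ (t % 3 = 0 ∧ t ≠ 0) ∨ t % 3 = 1 ∨ t % 3 = 2) with rfl | ⟨h3, h0⟩ | h1 | h2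
  · rw [show (p:ℤ)+1-((0:ℕ):ℤ) = (p:ℤ)+1 by push_cast; ring,
      show (p:ℤ)-((0:ℕ):ℤ) = (p:ℤ) by push_cast; ring]
    exact key2_t0 q hq1 p
  · obtain ⟨v, rfl⟩ : ∃ v, t = 3*v+3 := ⟨t/3 - 1, by omega⟩
    obtain ⟨d, rfl⟩ : ∃ d, p = 3*v+2+d := ⟨p - (3*v+2), by omega⟩
    have := key2_3 q v d
    rw [show 3*(v+1)+1 = 3*v+3+1 from by ring] at this
    rw [show ((3*v+2+d:ℕ):ℤ)+1-((3*v+3:ℕ):ℤ) = (d:ℤ) by push_cast; ring,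
      show ((3*v+2+d:ℕ):ℤ)-((3*v+3:ℕ):ℤ) = (d:ℤ)-1 by push_cast; ring]
    exact this
  · obtain ⟨k, rfl⟩ : ∃ k, t = 3*k+1 := ⟨t/3, by omega⟩
    obtain ⟨d, rfl⟩ : ∃ d, p = 3*k+d := ⟨p - 3*k, by omega⟩
    have := key2_1 q k d
    rw [show 3*k+2 = 3*k+1+1 from by ring] at this
    rw [show ((3*k+d:ℕ):ℤ)+1-((3*k+1:ℕ):ℤ) = (d:ℤ) by push_cast; ring,
      show ((3*k+d:ℕ):ℤ)-((3*k+1:ℕ):ℤ) = (d:ℤ)-1 by push_cast; ring]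
    exact this
  · obtain ⟨k, rfl⟩ : ∃ k, t = 3*k+2 := ⟨t/3, by omega⟩
    obtain ⟨d, rfl⟩ : ∃ d, p = 3*k+1+d := ⟨p - (3*k+1), by omega⟩
    have := key2_2 q k d
    rw [show 3*k+3 = 3*k+2+1 from by ring] at this
    rw [show ((3*k+1+d:ℕ):ℤ)+1-((3*k+2:ℕ):ℤ) = (d:ℤ) by push_cast; ring,
      show ((3*k+1+d:ℕ):ℤ)-((3*k+2:ℕ):ℤ) = (d:ℤ)-1 by push_cast; ring]
    exact this

lemma H2_top (p : ℕ) : H2 q p (p+2) = 0 := by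
  rcases (by omega : p % 3 = 0 ∨ p % 3 = 1 ∨ p % 3 = 2) with h | h | h
  · obtain ⟨k, rfl⟩ : ∃ k, p = 3*k := ⟨p/3, by omega⟩
    rw [show 3*k+2 = 3*k+2 from rfl, H2_2, gb_neg q _ _ (by push_cast; omega), mul_zero]
  · obtain ⟨v, rfl⟩ : ∃ v, p = 3*v+1 := ⟨p/3, by omega⟩
    rw [show 3*v+1+2 = 3*v+3 from by ring, H2_3, gb_neg q _ _ (by push_cast; omega), mul_zero]
  · obtain ⟨k, rfl⟩ : ∃ k, p = 3*k+2 := ⟨p/3, by omega⟩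
    rw [show 3*k+2+2 = 3*(k+1)+1 from by ring, H2_1, gb_neg q _ _ (by push_cast; omega), mul_zero]

lemma step2 (hq1 : ‖q‖ < 1) (p : ℕ)
    (hO : ∑ t ∈ Finset.range (p+1), ee q t * gb q (2*p+1) ((p:ℤ)-t) = 1) :
    ∑ t ∈ Finset.range (p+2), ff q t * gb q (2*p+2) ((p:ℤ)+1-t) = 1 := by
  have hOx : ∑ t ∈ Finset.range (p+2), ee q t * gb q (2*p+1) ((p:ℤ)-t) = 1 := by
    rw [Finset.sum_range_succ, gb_neg q _ _ (by push_cast; omega), mul_zero, add_zero, hO]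
  have key : ∀ t ∈ Finset.range (p+2),
      ff q t * gb q (2*p+2) ((p:ℤ)+1-t)
        = ee q t * gb q (2*p+1) ((p:ℤ)-t) + (H2 q p (t+1) - H2 q p t) := by
    intro t htm
    have h := key2 q hq1 p t (by have := Finset.mem_range.mp htm; omega)
    linear_combination h
  rw [Finset.sum_congr rfl key, Finset.sum_add_distrib, hOx,
    Finset.sum_range_sub (H2 q p) (p+2), H2_top, H2_0]
  ring

lemma schur_both (hq1 : ‖q‖ < 1) : ∀ n : ℕ,
    (∑ t ∈ Finset.range (n+1), ff q t * gb q (2*n) ((n:ℤ)-t) = 1) ∧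
    (∑ t ∈ Finset.range (n+1), ee q t * gb q (2*n+1) ((n:ℤ)-t) = 1) := by
  intro n
  induction n with
  | zero =>
    have he : ∑ t ∈ Finset.range (0+1), ff q t * gb q (2*0) (((0:ℕ):ℤ)-t) = 1 := by
      rw [Finset.sum_range_one, ff_zero]
      norm_num [gb]
    exact ⟨he, step1 q 0 he⟩
  | succ n ih =>
    have hE := step2 q hq1 n ih.2
    have hE' : ∑ t ∈ Finset.range ((n+1)+1), ff q t * gb q (2*(n+1)) (((n+1:ℕ):ℤ)-t) = 1 := by
      have hgb : ∀ t : ℕ, gb q (2*(n+1)) (((n+1:ℕ):ℤ)-t) = gb q (2*n+2) ((n:ℤ)+1-t) := by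
        intro t
        rw [show 2*(n+1) = 2*n+2 from by ring,
          show ((n+1:ℕ):ℤ)-(t:ℤ) = (n:ℤ)+1-t by push_cast; ring]
      simp only [hgb]
      exact hE
    exact ⟨hE', step1 q (n+1) hE'⟩

lemma schur_odd (hq1 : ‖q‖ < 1) (n : ℕ) :
    ∑ t ∈ Finset.range (n+1), ee q t * gb q (2*n+1) ((n:ℤ)-t) = 1 :=
  (schur_both q hq1 n).2

noncomputable def cc (q : ℂ) (t : ℕ) : ℂ :=
  if t % 3 = 0 then q ^ ((2 * t ^ 2 + t) / 3)
  else if t % 3 = 1 then -q ^ ((2 * t ^ 2 + t) / 3) else 0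

lemma cc_0 (k : ℕ) : cc q (3*k) = q^(6*k^2+k) := by
  simp only [cc]
  rw [show (3*k)%3 = 0 from by omega, if_pos rfl,
    show (2*(3*k)^2+(3*k))/3 = 6*k^2+k from by
      rw [show 2*(3*k)^2+(3*k) = (6*k^2+k)*3 from by ring, Nat.mul_div_cancel _ (by norm_num)]]

lemma cc_1 (k : ℕ) : cc q (3*k+1) = -q^(6*k^2+5*k+1) := by
  simp only [cc]
  rw [show (3*k+1)%3 = 1 from by omega, if_neg (by norm_num), if_pos rfl,
    show (2*(3*k+1)^2+(3*k+1))/3 = 6*k^2+5*k+1 from by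
      rw [show 2*(3*k+1)^2+(3*k+1) = (6*k^2+5*k+1)*3 from by ring,
        Nat.mul_div_cancel _ (by norm_num)]]

lemma cc_2 (k : ℕ) : cc q (3*k+2) = 0 := by
  simp only [cc]
  rw [show (3*k+2)%3 = 2 from by omega, if_neg (by norm_num), if_neg (by norm_num)]

lemma cc_zero : cc q 0 = 1 := by
  have := cc_0 q 0
  rw [show 3*0 = 0 from by norm_num] at this
  rw [this]
  norm_num

lemma ee_zero : ee q 0 = 1 := by
  have := ee_0 q 0
  rw [show 3*0 = 0 from by norm_num] at this
  rw [this]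
  norm_num

lemma ee_cc (s : ℕ) : ee q (s+1) = cc q (s+1) - q^(2*s+2) * cc q s := by
  rcases (by omega : s % 3 = 0 ∨ s % 3 = 1 ∨ s % 3 = 2) with h | h | h
  · obtain ⟨k, rfl⟩ : ∃ k, s = 3*k := ⟨s/3, by omega⟩
    rw [ee_1, cc_1, cc_0]
    ring
  · obtain ⟨k, rfl⟩ : ∃ k, s = 3*k+1 := ⟨s/3, by omega⟩
    rw [show 3*k+1+1 = 3*k+2 from rfl, ee_2, cc_2, cc_1]
    ring
  · obtain ⟨k, rfl⟩ : ∃ k, s = 3*k+2 := ⟨s/3, by omega⟩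
    have hc := cc_0 q (k+1)
    rw [show 3*(k+1) = 3*k+2+1 from by ring] at hc
    rw [show 3*k+2+1 = 3*(k+1) from by ring, ee_0, cc_0, cc_2]
    ring

noncomputable def WG (q : ℂ) (n : ℕ) : ℕ → ℂ
  | 0 => 0
  | (s+1) => (1 - q^(2*n+2)) * q^(2*s+2) * cc q s * gb q (2*n+1) ((n:ℤ)-s-1)

lemma keyG0 (hq1 : ‖q‖ < 1) (d : ℕ) :
    cc q 0 * (1 - q^2) * gb q (2*d+2) (d:ℤ)
      - (1 - q^(2*d+2)) * (ee q 0 * gb q (2*d+1) (d:ℤ)) = WG q d 0 - WG q d 1 := by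
  have h1 := ratio1 q hq1 (2*d+1) d (by omega)
  rw [show 2*d+1+1-d = d+2 from by omega, show 2*d+1+1 = 2*d+2 from rfl] at h1
  have h2 := ratio2 q hq1 (2*d+1) d (by omega)
  rw [show 2*d+1+1 = 2*d+2 from rfl] at h2
  have hW1 : WG q d 1 = (1 - q^(2*d+2)) * q^(2*0+2) * cc q 0 * gb q (2*d+1) ((d:ℤ)-0-1) := rfl
  rw [hW1, show WG q d 0 = 0 from rfl, cc_zero, ee_zero,
    show (d:ℤ)-0-1 = (d:ℤ)-1 by ring]
  linear_combination h1 - q^2 * h2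

lemma keyGs (hq1 : ‖q‖ < 1) (s d : ℕ) :
    cc q (s+1) * (1 - q^(2*(s+1)+2)) * gb q (2*(s+1+d)+2) (d:ℤ)
      - (1 - q^(2*(s+1+d)+2)) * (ee q (s+1) * gb q (2*(s+1+d)+1) (d:ℤ))
      = WG q (s+1+d) (s+1) - WG q (s+1+d) (s+2) := by
  have h1 := ratio1 q hq1 (2*(s+1+d)+1) d (by omega)
  rw [show 2*(s+1+d)+1+1-d = 2*s+d+4 from by omega,
    show 2*(s+1+d)+1+1 = 2*(s+1+d)+2 from rfl] at h1
  have h2 := ratio2 q hq1 (2*(s+1+d)+1) d (by omega)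
  rw [show 2*(s+1+d)+1+1 = 2*(s+1+d)+2 from rfl] at h2
  have hW1 : WG q (s+1+d) (s+1)
      = (1 - q^(2*(s+1+d)+2)) * q^(2*s+2) * cc q s * gb q (2*(s+1+d)+1) (((s+1+d:ℕ):ℤ)-s-1) := rfl
  have hW2 : WG q (s+1+d) (s+2)
      = (1 - q^(2*(s+1+d)+2)) * q^(2*(s+1)+2) * cc q (s+1)
        * gb q (2*(s+1+d)+1) (((s+1+d:ℕ):ℤ)-(s+1)-1) := rfl
  rw [hW1, hW2, ee_cc q s,
    show ((s+1+d:ℕ):ℤ)-s-1 = (d:ℤ) by push_cast; ring,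
    show ((s+1+d:ℕ):ℤ)-(s+1)-1 = (d:ℤ)-1 by push_cast; ring]
  linear_combination cc q (s+1) * h1 - q^(2*(s+1)+2) * cc q (s+1) * h2

lemma keyG (hq1 : ‖q‖ < 1) (n t : ℕ) (ht : t ≤ n) :
    cc q t * (1 - q^(2*t+2)) * gb q (2*n+2) ((n:ℤ)-t)
      - (1 - q^(2*n+2)) * (ee q t * gb q (2*n+1) ((n:ℤ)-t))
      = WG q n t - WG q n (t+1) := by
  cases t with
  | zero =>
    rw [show (n:ℤ)-((0:ℕ):ℤ) = (n:ℤ) by push_cast; ring, show 2*0+2 = 2 from rfl]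
    exact keyG0 q hq1 n
  | succ s =>
    obtain ⟨d, rfl⟩ : ∃ d, n = s+1+d := ⟨n - (s+1), by omega⟩
    rw [show ((s+1+d:ℕ):ℤ)-((s+1:ℕ):ℤ) = (d:ℤ) by push_cast; ring]
    exact keyGs q hq1 s d

lemma Glemma (hq1 : ‖q‖ < 1) (n : ℕ) :
    ∑ t ∈ Finset.range (n+1), cc q t * (1 - q^(2*t+2)) * gb q (2*n+2) ((n:ℤ)-t)
      = 1 - q^(2*n+2) := by
  have key : ∀ t ∈ Finset.range (n+1),
      cc q t * (1 - q^(2*t+2)) * gb q (2*n+2) ((n:ℤ)-t)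
        = (1 - q^(2*n+2)) * (ee q t * gb q (2*n+1) ((n:ℤ)-t)) + (WG q n t - WG q n (t+1)) := by
    intro t htm
    have h := keyG q hq1 n t (by have := Finset.mem_range.mp htm; omega)
    linear_combination h
  rw [Finset.sum_congr rfl key, Finset.sum_add_distrib, ← Finset.mul_sum,
    schur_odd q hq1 n, Finset.sum_range_sub' (WG q n) (n+1)]
  have hWtop : WG q n (n+1) = 0 := by
    have h : WG q n (n+1) = (1 - q^(2*n+2)) * q^(2*n+2) * cc q n * gb q (2*n+1) ((n:ℤ)-n-1) := rfl
    rw [h, gb_neg q _ _ (by omega), mul_zero]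
  rw [hWtop, show WG q n 0 = 0 from rfl]
  ring

end BP2

theorem bailey_pair_2 (q : ℂ) (hq0 : 0 < ‖q‖) (hq1 : ‖q‖ < 1) :
    IsBaileyPair q (q ^ 2)
      (fun m => (1 - q ^ (2 * m + 2)) / (1 - q ^ 2) *
        (if m % 3 = 0 then q ^ ((2 * m ^ 2 + m) / 3)
          else if m % 3 = 1 then -q ^ ((2 * m ^ 2 + m) / 3) else 0))
      (fun n => 1 / qPoch (q ^ 2) q (2 * n)) := by
  intro n
  simp only
  have key : ∀ t ∈ Finset.range (n+1),
      (1 - q ^ (2 * t + 2)) / (1 - q ^ 2) *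
          (if t % 3 = 0 then q ^ ((2 * t ^ 2 + t) / 3)
            else if t % 3 = 1 then -q ^ ((2 * t ^ 2 + t) / 3) else 0) /
        (qPoch q q (n - t) * qPoch (q ^ 2 * q) q (n + t))
      = (1 - q) / qPoch q q (2*n+2)
          * (BP2.cc q t * (1 - q^(2*t+2)) * BP2.gb q (2*n+2) ((n:ℤ)-t)) := by
    intro t htm
    have ht : t ≤ n := by have := Finset.mem_range.mp htm; omega
    have hg := BP2.gb_mul q (2*n+2) (n-t) (by omega)
    rw [show 2*n+2-(n-t) = n+t+2 from by omega, Nat.cast_sub ht,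
      ← BP2.p3_eq q (n+t)] at hg
    have hX := BP2.pq_ne q hq1 (n-t)
    have hY := BP2.p3_ne q hq1 (n+t)
    have hP2 := BP2.pq_ne q hq1 (2*n+2)
    have h2 : (1:ℂ) - q^2 ≠ 0 := BP2.one_sub_ne q hq1 2 (by norm_num)
    rw [show (if t % 3 = 0 then q ^ ((2 * t ^ 2 + t) / 3)
          else if t % 3 = 1 then -q ^ ((2 * t ^ 2 + t) / 3) else 0) = BP2.cc q t from rfl]
    rw [div_mul_eq_mul_div, div_div, div_mul_eq_mul_div,
      div_eq_div_iff (by exact mul_ne_zero h2 (mul_ne_zero hX hY)) hP2]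
    linear_combination (-(1 - q^(2*t+2)) * BP2.cc q t) * hg
  rw [Finset.sum_congr rfl key, ← Finset.mul_sum, BP2.Glemma q hq1 n]
  have hP2n := BP2.p2_ne q hq1 (2*n)
  have hPq := BP2.pq_ne q hq1 (2*n+2)
  rw [div_mul_eq_mul_div, div_eq_div_iff hP2n hPq]
  have e1 := BP2.p2_eq q (2*n)
  have e2 := BP2.pq_succ q (2*n+1)
  rw [show 2*n+1+1 = 2*n+2 from rfl] at e2
  linear_combination e2 - (1-q^(2*n+2)) * e1
end
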